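/- arXiv:math/0308213 — 7 statements merged into one kernel-verified Lean document; each statement's English description precedes it below -/
import Mathlib

section
/- If τ is a Salem number of degree d over ℚ and trace −T, then τ + 1/τ + 2 is a totally positive algebraic integer of degree d/2 and trace d − T. -/
open Polynomial
open IntermediateField

/-- The multiset of Galois conjugates (in `ℂ`) of a real algebraic number:
the complex roots of its minimal polynomial over `ℚ`. -/
noncomputable def conjugatesC (τ : ℝ) : Multiset ℂ :=
  ((minpoly ℚ τ).map (algebraMap ℚ ℂ)).roots

/-- The trace of a real algebraic number: minus the coefficient of the
second-highest power of its monic minimal polynomial over `ℚ`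
(equivalently, the sum of its Galois conjugates). -/
noncomputable def traceQ (τ : ℝ) : ℚ :=
  -((minpoly ℚ τ).coeff ((minpoly ℚ τ).natDegree - 1))

/-- A Salem number: a real algebraic integer `τ > 1` whose Galois conjugates other than `τ`
all lie in the closed unit disc, with at least one on the unit circle. -/
def IsSalem (τ : ℝ) : Prop :=
  IsIntegral ℤ τ ∧ 1 < τ ∧
    (∀ z ∈ conjugatesC τ, z ≠ (τ : ℂ) → ‖z‖ ≤ 1) ∧
    (∃ z ∈ conjugatesC τ, ‖z‖ = 1)

noncomputable def trf (f : ℚ[X]) (m : ℕ) : ℚ[X] :=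
  ∑ i ∈ Finset.range (m+1), C (f.coeff i) * (X+1)^(2*i) * X^(m-i)

lemma aeval_trf {K : Type*} [Field K] [Algebra ℚ K] (f : ℚ[X]) (m : ℕ)
    (hf : f.natDegree ≤ m) {x : K} (hx : x ≠ 0) :
    aeval x (trf f m) = x ^ m * aeval (x + x⁻¹ + 2) f := by
  have key : (x + x⁻¹ + 2) * x = (x+1)^2 := by field_simp; ring
  rw [trf, map_sum, aeval_eq_sum_range' (lt_of_le_of_lt hf (Nat.lt_succ_self m)),
    Finset.mul_sum]
  apply Finset.sum_congr rfl
  intro i hi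
  have him : i ≤ m := Nat.lt_succ_iff.mp (Finset.mem_range.mp hi)
  have h1 : (x + x⁻¹ + 2)^i * x^i = (x+1)^(2*i) := by
    rw [← mul_pow, key, ← pow_mul]
  have h2 : (x+1)^(2*i) * x^(m-i) = x^m * (x + x⁻¹ + 2)^i := by
    rw [← h1, mul_assoc, ← pow_add, Nat.add_sub_cancel' him]
    ring
  simp only [map_mul, map_pow, aeval_C, aeval_X, map_add, map_one, Algebra.smul_def]
  rw [mul_assoc, h2]
  ring

lemma trf_term_coeff (a : ℚ) (i j n : ℕ) :
    (C a * (X+1)^i * X^j : ℚ[X]).coeff n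
      = if j ≤ n then a * (i.choose (n - j) : ℚ) else 0 := by
  rw [coeff_mul_X_pow', coeff_C_mul, coeff_X_add_one_pow]

lemma trf_natDegree_le (f : ℚ[X]) (m : ℕ) : (trf f m).natDegree ≤ 2*m := by
  apply Polynomial.natDegree_sum_le_of_forall_le
  intro i hi
  have him : i ≤ m := Nat.lt_succ_iff.mp (Finset.mem_range.mp hi)
  calc (C (f.coeff i) * (X+1)^(2*i) * X^(m-i) : ℚ[X]).natDegree
      ≤ (C (f.coeff i) * (X+1)^(2*i) : ℚ[X]).natDegree + (X^(m-i) : ℚ[X]).natDegree :=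
        natDegree_mul_le
    _ ≤ ((C (f.coeff i)).natDegree + ((X+1 : ℚ[X])^(2*i)).natDegree) + (X^(m-i) : ℚ[X]).natDegree := by
        gcongr; exact natDegree_mul_le
    _ ≤ (0 + 2*i) + (m - i) := by
        gcongr
        · simp
        · calc ((X+1 : ℚ[X])^(2*i)).natDegree ≤ 2*i * (X+1 : ℚ[X]).natDegree := natDegree_pow_le
            _ ≤ 2*i * 1 := by gcongr; rw [← C_1]; exact (natDegree_X_add_C (1:ℚ)).le
            _ = 2*i := mul_one _
        · simp [natDegree_X_pow]
    _ ≤ 2*m := by omega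

lemma trf_coeff_top (f : ℚ[X]) (m : ℕ) : (trf f m).coeff (2*m) = f.coeff m := by
  rw [trf, finset_sum_coeff, Finset.sum_range_succ, trf_term_coeff]
  have h1 : ∀ i ∈ Finset.range m,
      (C (f.coeff i) * (X+1)^(2*i) * X^(m-i) : ℚ[X]).coeff (2*m) = 0 := by
    intro i hi
    have him : i < m := Finset.mem_range.mp hi
    rw [trf_term_coeff, if_pos (by omega), Nat.choose_eq_zero_of_lt (by omega)]
    simp
  rw [Finset.sum_eq_zero h1]
  simp

lemma trf_coeff_next (f : ℚ[X]) (m : ℕ) (hm : 1 ≤ m) :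
    (trf f m).coeff (2*m - 1) = (2*m : ℚ) * f.coeff m + f.coeff (m-1) := by
  obtain ⟨k, rfl⟩ : ∃ k, m = k + 1 := ⟨m - 1, by omega⟩
  rw [trf, finset_sum_coeff, Finset.sum_range_succ, Finset.sum_range_succ]
  have h1 : ∀ i ∈ Finset.range k,
      (C (f.coeff i) * (X+1)^(2*i) * X^(k+1-i) : ℚ[X]).coeff (2*(k+1) - 1) = 0 := by
    intro i hi
    have him : i < k := Finset.mem_range.mp hi
    rw [trf_term_coeff, if_pos (by omega), Nat.choose_eq_zero_of_lt (by omega)]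
    simp
  rw [Finset.sum_eq_zero h1, trf_term_coeff, trf_term_coeff,
    if_pos (by omega), if_pos (by omega)]
  have e1 : 2*(k+1) - 1 - (k+1-k) = 2*k := by omega
  have e2 : 2*(k+1) - 1 - (k+1-(k+1)) = 2*k+1 := by omega
  have hc : (2*(k+1)).choose (2*k+1) = 2*(k+1) := by
    rw [← Nat.choose_symm (by omega : 2*k+1 ≤ 2*(k+1)),
      show 2*(k+1) - (2*k+1) = 1 from by omega, Nat.choose_one_right]
  rw [e1, e2, Nat.choose_self, hc]
  push_cast
  ring

lemma trf_monic (f : ℚ[X]) (m : ℕ) (hf : f.Monic) (hfd : f.natDegree = m) :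
    (trf f m).Monic ∧ (trf f m).natDegree = 2*m := by
  have htop : (trf f m).coeff (2*m) = 1 := by
    rw [trf_coeff_top, ← hfd]; exact hf
  have hdeg : (trf f m).natDegree = 2*m :=
    le_antisymm (trf_natDegree_le f m) (le_natDegree_of_ne_zero (by rw [htop]; norm_num))
  refine ⟨?_, hdeg⟩
  unfold Polynomial.Monic
  rw [leadingCoeff, hdeg, htop]

lemma aeval_inv_root {K : Type*} [Field K] [Algebra ℚ K] {P : ℚ[X]} (hrev : P.reverse = P)
    {x : K} (hx : x ≠ 0) (h : aeval x P = 0) : aeval x⁻¹ P = 0 := by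
  letI := invertibleOfNonzero hx
  have h2 := (eval₂_reverse_eq_zero_iff (algebraMap ℚ K) x P).mpr (by rwa [aeval_def] at h)
  rw [hrev, invOf_eq_inv] at h2
  rwa [aeval_def]

lemma aeval_star_rat (P : ℚ[X]) (z : ℂ) :
    aeval ((starRingEnd ℂ) z) P = (starRingEnd ℂ) (aeval z P) := by
  rw [aeval_def, aeval_def, hom_eval₂]
  congr 1
  exact Subsingleton.elim _ _


lemma mem_conjugatesC_iff {τ : ℝ} (h : IsIntegral ℚ τ) (z : ℂ) :
    z ∈ conjugatesC τ ↔ aeval z (minpoly ℚ τ) = 0 := by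
  have hne : (minpoly ℚ τ).map (algebraMap ℚ ℂ) ≠ 0 :=
    (Polynomial.map_ne_zero_iff (algebraMap ℚ ℂ).injective).mpr (minpoly.ne_zero h)
  rw [conjugatesC, mem_roots hne, IsRoot.def, eval_map, ← aeval_def]

lemma no_rat_root {P : ℚ[X]} (hirr : Irreducible P) (hdeg : 2 ≤ P.natDegree) (a : ℚ) :
    P.eval a ≠ 0 := by
  intro ha
  obtain ⟨g, hg⟩ := dvd_iff_isRoot.mpr ha
  rcases hirr.isUnit_or_isUnit hg with h | h
  · exact Polynomial.not_isUnit_X_sub_C a h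
  · have hg0 : g ≠ 0 := fun h0 => by
      rw [h0] at h; exact (by simp : ¬ IsUnit (0 : ℚ[X])) h
    have : P.natDegree = 1 := by
      rw [hg, natDegree_mul (X_sub_C_ne_zero a) hg0, natDegree_X_sub_C,
        natDegree_eq_zero_of_isUnit h]
    omega

lemma salem_deg_two {τ : ℝ} (hτ : IsSalem τ) (hτQ : IsIntegral ℚ τ) :
    2 ≤ (minpoly ℚ τ).natDegree := by
  obtain ⟨hint, hτ1, hbound, z₀, hz₀mem, hz₀abs⟩ := hτ
  by_contra h
  have h1 : (minpoly ℚ τ).natDegree = 1 := by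
    have := minpoly.natDegree_pos hτQ
    omega
  set c0 := (minpoly ℚ τ).coeff 0 with hc0
  have hPeq : minpoly ℚ τ = X + C c0 := (minpoly.monic hτQ).eq_X_add_C h1
  have hτval : τ = -(c0 : ℝ) := by
    have := minpoly.aeval ℚ τ
    rw [hPeq] at this
    simp at this
    linarith [this]
  have hz₀val : z₀ = -((c0:ℚ) : ℂ) := by
    have := (mem_conjugatesC_iff hτQ z₀).mp hz₀mem
    rw [hPeq] at this
    simp at this
    linear_combination this
  rw [hz₀val] at hz₀abs
  have : ‖(-((c0:ℚ) : ℂ))‖ = |(c0:ℝ)| := by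
    rw [norm_neg]
    rw [show ((c0:ℚ):ℂ) = (((c0:ℚ):ℝ):ℂ) by push_cast; ring]
    rw [Complex.norm_real, Real.norm_eq_abs]
  rw [this] at hz₀abs
  have : |(c0:ℝ)| = τ := by rw [hτval]; rw [abs_of_nonpos (by linarith [hτval ▸ hτ1])]  -- messy
  linarith [hz₀abs, this, hτ1]


lemma salem_reverse {τ : ℝ} (hτ : IsSalem τ) (hτQ : IsIntegral ℚ τ) :
    (minpoly ℚ τ).reverse = minpoly ℚ τ ∧ (minpoly ℚ τ).coeff 0 = 1 := by
  obtain ⟨hint, hτ1, hbound, z₀, hz₀mem, hz₀abs⟩ := hτ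
  set P := minpoly ℚ τ with hPdef
  have hPmonic : P.Monic := minpoly.monic hτQ
  have hPne : P ≠ 0 := hPmonic.ne_zero
  have hPirr := minpoly.irreducible hτQ
  have hD2 : 2 ≤ P.natDegree := salem_deg_two ⟨hint, hτ1, hbound, z₀, hz₀mem, hz₀abs⟩ hτQ
  have hz₀ne : z₀ ≠ 0 := by
    intro h; rw [h] at hz₀abs; simp at hz₀abs
  have hz₀root : aeval z₀ P = 0 := (mem_conjugatesC_iff hτQ z₀).mp hz₀mem
  have hstarroot : aeval ((starRingEnd ℂ) z₀) P = 0 := by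
    rw [aeval_star_rat, hz₀root, map_zero]
  have hstar_inv : (starRingEnd ℂ) z₀ = z₀⁻¹ := by
    apply eq_inv_of_mul_eq_one_right
    rw [Complex.mul_conj]
    norm_cast
    rw [Complex.normSq_eq_norm_sq, hz₀abs]
    norm_num
  have hminz₀ : P = minpoly ℚ z₀ :=
    minpoly.eq_of_irreducible_of_monic hPirr hz₀root hPmonic
  have hinvroot : aeval z₀⁻¹ P = 0 := by rw [← hstar_inv]; exact hstarroot
  have hrevroot : aeval z₀ P.reverse = 0 := by
    letI := invertibleOfNonzero (inv_ne_zero hz₀ne)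
    have h2 := (eval₂_reverse_eq_zero_iff (algebraMap ℚ ℂ) z₀⁻¹ P).mpr
      (by rw [← aeval_def]; exact hinvroot)
    rw [invOf_eq_inv, inv_inv] at h2
    rwa [aeval_def]
  have hPdvdrev : P ∣ P.reverse := by
    have h6 := minpoly.dvd ℚ z₀ hrevroot
    rwa [← hminz₀] at h6
  obtain ⟨g, hg⟩ := hPdvdrev
  have hrevne : P.reverse ≠ 0 := by simpa using hPne
  have hgne : g ≠ 0 := by
    intro h; rw [h, mul_zero] at hg; exact hrevne hg
  have hdegg : g.natDegree = 0 := by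
    have h3 := Polynomial.reverse_natDegree_le P
    rw [hg, natDegree_mul hPne hgne] at h3
    omega
  obtain ⟨c, hc⟩ := Polynomial.natDegree_eq_zero.mp hdegg
  rw [← hc] at hg
  have h1 : (1:ℚ) = P.coeff 0 * c := by
    have h4 := congrArg (fun p => Polynomial.coeff p 0) hg
    simpa [coeff_zero_reverse, hPmonic.leadingCoeff, coeff_mul_C] using h4
  have h2 : P.coeff 0 = c := by
    have h4 := congrArg (fun p => Polynomial.coeff p (P.natDegree)) hg
    simp only [coeff_mul_C] at h4
    rw [coeff_reverse, revAt_le le_rfl, Nat.sub_self] at h4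
    rw [h4, hPmonic.coeff_natDegree, one_mul]
  have hcc : c * c = 1 := by rw [h2] at h1; linarith [h1]
  rcases mul_self_eq_one_iff.mp hcc with hc1 | hcm1
  · constructor
    · rw [hg, hc1, map_one, mul_one]
    · rw [h2, hc1]
  · exfalso
    have hgneg : P.reverse = -P := by rw [hg, hcm1]; simp
    letI : Invertible (1:ℚ) := invertibleOne
    have h5 := eval₂_reverse_mul_pow (RingHom.id ℚ) (1:ℚ) P
    rw [invOf_one, one_pow, mul_one] at h5
    have heval : P.reverse.eval 1 = P.eval 1 := h5
    rw [hgneg] at heval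
    simp at heval
    have h7 : P.eval 1 = 0 := by linarith
    exact no_rat_root hPirr hD2 1 h7

lemma inv_isIntegral {τ : ℝ} (hint : IsIntegral ℤ τ) (hτne : τ ≠ 0)
    (hc0 : (minpoly ℚ τ).coeff 0 = 1) : IsIntegral ℤ τ⁻¹ := by
  have hPz : minpoly ℚ τ = (minpoly ℤ τ).map (algebraMap ℤ ℚ) :=
    minpoly.isIntegrallyClosed_eq_field_fractions' ℚ hint
  have hz0 : (minpoly ℤ τ).coeff 0 = 1 := by
    have h4 := congrArg (fun p => Polynomial.coeff p 0) hPz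
    simp only [coeff_map, hc0] at h4
    have h5 : ((minpoly ℤ τ).coeff 0 : ℚ) = 1 := by
      rw [show (((minpoly ℤ τ).coeff 0 : ℚ)) = (algebraMap ℤ ℚ) ((minpoly ℤ τ).coeff 0) from by
        simp [algebraMap_int_eq]]
      exact h4.symm
    exact_mod_cast h5
  have hz0ne : (minpoly ℤ τ).coeff 0 ≠ 0 := by rw [hz0]; norm_num
  have htd : (minpoly ℤ τ).natTrailingDegree = 0 :=
    Nat.le_zero.mp (natTrailingDegree_le_of_ne_zero hz0ne)
  have hrevmonic : (minpoly ℤ τ).reverse.Monic := by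
    unfold Polynomial.Monic
    rw [reverse_leadingCoeff, trailingCoeff, htd, hz0]
  refine ⟨(minpoly ℤ τ).reverse, hrevmonic, ?_⟩
  letI := invertibleOfNonzero hτne
  have h2 := (eval₂_reverse_eq_zero_iff (algebraMap ℤ ℝ) τ (minpoly ℤ τ)).mpr
    (by rw [← aeval_def]; exact minpoly.aeval ℤ τ)
  rwa [invOf_eq_inv] at h2

lemma salem_deg_eq {τ : ℝ} (hτQ : IsIntegral ℚ τ) (hτ1 : 1 < τ)
    (hrev : (minpoly ℚ τ).reverse = minpoly ℚ τ)
    (hθQ : IsIntegral ℚ (τ + τ⁻¹ + 2))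
    (hDle : (minpoly ℚ τ).natDegree ≤ 2 * (minpoly ℚ (τ + τ⁻¹ + 2)).natDegree) :
    (minpoly ℚ τ).natDegree = 2 * (minpoly ℚ (τ + τ⁻¹ + 2)).natDegree := by
  have hτ0 : (0:ℝ) < τ := lt_trans one_pos hτ1
  have hτne : τ ≠ 0 := ne_of_gt hτ0
  set θ := τ + τ⁻¹ + 2 with hθdef
  set m := (minpoly ℚ θ).natDegree with hmdef
  have hm1 : 1 ≤ m := minpoly.natDegree_pos hθQ
  have hfin : FiniteDimensional ℚ ℚ⟮τ⟯ := IntermediateField.adjoin.finiteDimensional hτQ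
  have hτmem : τ ∈ (ℚ⟮τ⟯ : IntermediateField ℚ ℝ) :=
    IntermediateField.mem_adjoin_simple_self ℚ τ
  have h2mem : (2:ℝ) ∈ (ℚ⟮τ⟯ : IntermediateField ℚ ℝ) := by
    have := IntermediateField.algebraMap_mem (ℚ⟮τ⟯ : IntermediateField ℚ ℝ) (2:ℚ)
    simpa using this
  have hθmem : θ ∈ (ℚ⟮τ⟯ : IntermediateField ℚ ℝ) :=
    add_mem (add_mem hτmem (inv_mem hτmem)) h2mem
  -- m divides the degree of τ
  have hQ' : minpoly ℚ (⟨θ, hθmem⟩ : ℚ⟮τ⟯) = minpoly ℚ θ := by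
    have := minpoly.algebraMap_eq (B := ℚ⟮τ⟯) (B' := ℝ) (A := ℚ)
      (algebraMap (ℚ⟮τ⟯ : IntermediateField ℚ ℝ) ℝ).injective (⟨θ, hθmem⟩ : ℚ⟮τ⟯)
    rw [← this]
    rfl
  have hmdvd : m ∣ (minpoly ℚ τ).natDegree := by
    have h := minpoly.degree_dvd (K := ℚ) (L := ℚ⟮τ⟯) (x := ⟨θ, hθmem⟩)
      (IsIntegral.of_finite ℚ _)
    rwa [hQ', IntermediateField.adjoin.finrank hτQ] at h
  -- m ≠ degree of τ
  have hmne : m ≠ (minpoly ℚ τ).natDegree := by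
    intro he
    have hle : (ℚ⟮θ⟯ : IntermediateField ℚ ℝ) ≤ ℚ⟮τ⟯ :=
      IntermediateField.adjoin_simple_le_iff.mpr hθmem
    have heq : (ℚ⟮θ⟯ : IntermediateField ℚ ℝ) = ℚ⟮τ⟯ :=
      IntermediateField.eq_of_le_of_finrank_eq hle (by
        rw [IntermediateField.adjoin.finrank hθQ, IntermediateField.adjoin.finrank hτQ, ← he])
    have hτθ' : τ ∈ (ℚ⟮θ⟯ : IntermediateField ℚ ℝ) := heq ▸ hτmem
    have hτθ : τ ∈ Algebra.adjoin ℚ ({θ} : Set ℝ) := by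
      have h8 : ((ℚ⟮θ⟯ : IntermediateField ℚ ℝ) : Set ℝ)
          = (Algebra.adjoin ℚ ({θ} : Set ℝ) : Subalgebra ℚ ℝ) := by
        rw [← IntermediateField.adjoin_simple_toSubalgebra_of_isAlgebraic hθQ.isAlgebraic]
        rfl
      have : τ ∈ ((ℚ⟮θ⟯ : IntermediateField ℚ ℝ) : Set ℝ) := hτθ'
      rwa [h8] at this
    rw [Algebra.adjoin_singleton_eq_range_aeval] at hτθ
    obtain ⟨f, hf0⟩ := hτθ
    have hf : aeval θ f = τ := hf0
    set k := f.natDegree with hkdef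
    have hS : aeval τ (X^(k+1) - trf f k) = 0 := by
      rw [map_sub, aeval_trf f k le_rfl hτne]
      rw [hf]
      simp [pow_succ]
    obtain ⟨g2, hg2⟩ := minpoly.dvd ℚ τ hS
    have hτinvroot : aeval τ⁻¹ (minpoly ℚ τ) = 0 :=
      aeval_inv_root hrev hτne (minpoly.aeval ℚ τ)
    have hS2 : aeval τ⁻¹ (X^(k+1) - trf f k) = 0 := by
      rw [hg2, map_mul, hτinvroot, zero_mul]
    rw [map_sub, aeval_trf f k le_rfl (inv_ne_zero hτne), inv_inv] at hS2
    have hcomm : τ⁻¹ + τ + 2 = θ := by rw [hθdef]; ring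
    rw [hcomm, hf] at hS2
    simp only [map_pow, aeval_X] at hS2
    have hpk : (0:ℝ) < (τ⁻¹)^k := by positivity
    have hinv_eq : τ⁻¹ = τ := by
      have h9 : (τ⁻¹)^k * τ⁻¹ = (τ⁻¹)^k * τ := by
        rw [← pow_succ]
        linarith [hS2]
      exact mul_left_cancel₀ (ne_of_gt hpk) h9
    have : τ * τ⁻¹ = 1 := mul_inv_cancel₀ hτne
    nlinarith [hinv_eq, hτ1]
  obtain ⟨j, hj⟩ := hmdvd
  have hD1 : 1 ≤ (minpoly ℚ τ).natDegree := minpoly.natDegree_pos hτQ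
  have hj2 : j = 2 := by
    have h1 : m * j ≤ 2 * m := hj ▸ hDle
    have h2 : j ≤ 2 := by
      by_contra h3
      have h4 : m * 3 ≤ m * j := Nat.mul_le_mul_left m (by omega)
      omega
    interval_cases j
    · simp at hj; omega
    · rw [mul_one] at hj; exact absurd hj.symm hmne
    · rfl
  rw [hj, hj2]
  exact Nat.mul_comm m 2

lemma aeval_ofReal_rat (p : ℚ[X]) (y : ℝ) :
    aeval ((y : ℂ)) p = ((aeval y p : ℝ) : ℂ) :=
  aeval_algHom_apply (AlgHom.restrictScalars ℚ Complex.ofRealAm) y p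

lemma salem_conj_pos {τ : ℝ} (hτ : IsSalem τ) (hτQ : IsIntegral ℚ τ)
    (hθQ : IsIntegral ℚ (τ + τ⁻¹ + 2))
    (hrev : (minpoly ℚ τ).reverse = minpoly ℚ τ)
    (hPeq : minpoly ℚ τ
      = trf (minpoly ℚ (τ + τ⁻¹ + 2)) (minpoly ℚ (τ + τ⁻¹ + 2)).natDegree) :
    ∀ w ∈ conjugatesC (τ + τ⁻¹ + 2), w.im = 0 ∧ 0 < w.re := by
  obtain ⟨hint, hτ1, hbound, hex⟩ := hτ
  have hτ0 : (0:ℝ) < τ := lt_trans one_pos hτ1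
  have hτne : τ ≠ 0 := ne_of_gt hτ0
  have hPirr := minpoly.irreducible hτQ
  have hD2 : 2 ≤ (minpoly ℚ τ).natDegree := salem_deg_two ⟨hint, hτ1, hbound, hex⟩ hτQ
  set P := minpoly ℚ τ with hPdef
  set Q := minpoly ℚ (τ + τ⁻¹ + 2) with hQdef
  set m := Q.natDegree with hmdef
  have hratroot : ∀ a : ℚ, aeval ((a:ℝ)) P ≠ 0 := by
    intro a ha
    refine no_rat_root hPirr hD2 a ?_
    have h1 : aeval ((a:ℝ)) P = algebraMap ℚ ℝ (P.eval a) := by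
      rw [show ((a:ℝ)) = algebraMap ℚ ℝ a from by norm_num,
        aeval_algebraMap_apply_eq_algebraMap_eval]
    rw [h1] at ha
    exact (_root_.map_eq_zero (algebraMap ℚ ℝ)).mp ha
  intro w hw
  have hwroot : aeval w Q = 0 := (mem_conjugatesC_iff hθQ w).mp hw
  -- find z with z + z⁻¹ + 2 = w which is a root of P
  have hdq : (0:WithBot ℕ) < (X^2 - C (w-2)*X + 1 : ℂ[X]).degree := by
    have : (X^2 - C (w-2)*X + 1 : ℂ[X]).degree = 2 := by compute_degree!
    rw [this]; norm_num
  obtain ⟨z, hz⟩ := Complex.exists_root hdq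
  have hzq : z^2 - (w-2)*z + 1 = 0 := by
    have := hz
    simp only [IsRoot.def, eval_add, eval_sub, eval_pow, eval_mul, eval_X, eval_C, eval_one] at this
    linear_combination this
  have hzne : z ≠ 0 := by
    intro h
    rw [h] at hzq
    simp at hzq
  have hw2 : z + z⁻¹ + 2 = w := by
    field_simp
    linear_combination hzq
  have hzP : aeval z P = 0 := by
    rw [hPeq, aeval_trf Q m le_rfl hzne, hw2, hwroot, mul_zero]
  have hzmem : z ∈ conjugatesC τ := (mem_conjugatesC_iff hτQ z).mpr hzP
  rw [← hw2]
  by_cases hzτ : z = (τ:ℂ)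
  · have hwre : z + z⁻¹ + 2 = ((τ + τ⁻¹ + 2 : ℝ) : ℂ) := by
      rw [hzτ]; push_cast; ring
    rw [hwre]
    constructor
    · simp
    · simp only [Complex.ofReal_re]
      positivity
  · have habs : ‖z‖ ≤ 1 := hbound z hzmem hzτ
    by_cases him : z.im = 0
    · -- z is real
      set x := z.re with hxdef
      have hzx : z = (x:ℂ) := Complex.ext rfl (by simp [him])
      have hxroot : aeval x P = 0 := by
        have h2 := hzP
        rw [hzx, aeval_ofReal_rat] at h2
        exact_mod_cast h2
      have hxne : x ≠ 0 := by
        intro h; rw [hzx, h] at hzne; simp at hzne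
      have hxabs : |x| ≤ 1 := by
        rw [hzx] at habs; simpa using habs
      have hx1 : x ≠ 1 := by
        intro h
        apply hratroot 1
        rw [show (((1:ℚ)):ℝ) = x from by rw [h]; norm_num]
        exact hxroot
      have hxm1 : x ≠ -1 := by
        intro h
        apply hratroot (-1)
        rw [show (((-1:ℚ)):ℝ) = x from by rw [h]; norm_num]
        exact hxroot
      rcases lt_or_gt_of_ne hxne with hneg | hpos
      · exfalso
        have hxlt : |x| < 1 := lt_of_le_of_ne hxabs (by
          intro h
          rcases abs_eq (by norm_num : (0:ℝ) ≤ 1) |>.mp h with h' | h'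
          · exact hx1 h'
          · exact hxm1 h')
        have hxinvroot : aeval x⁻¹ P = 0 := aeval_inv_root hrev hxne hxroot
        have hmemx : ((x⁻¹:ℝ):ℂ) ∈ conjugatesC τ :=
          (mem_conjugatesC_iff hτQ _).mpr (by rw [aeval_ofReal_rat, hxinvroot]; simp)
        have hnex : ((x⁻¹:ℝ):ℂ) ≠ (τ:ℂ) := by
          intro h
          have : x⁻¹ = τ := by exact_mod_cast h
          have : x⁻¹ < 0 := inv_neg''.mpr hneg
          linarith
        have hle1 : ‖((x⁻¹:ℝ):ℂ)‖ ≤ 1 := hbound _ hmemx hnex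
        rw [Complex.norm_real, Real.norm_eq_abs, abs_inv] at hle1
        have h0x : 0 < |x| := abs_pos.mpr hxne
        have hmul : |x|⁻¹ * |x| = 1 := inv_mul_cancel₀ (ne_of_gt h0x)
        nlinarith [hmul, hxlt, hle1, h0x, inv_pos.mpr h0x]
      · constructor
        · rw [hzx]
          simp
        · rw [hzx]
          have hcast : ((x:ℂ) + (x:ℂ)⁻¹ + 2) = ((x + x⁻¹ + 2 : ℝ) : ℂ) := by push_cast; ring
          rw [hcast]
          simp only [Complex.ofReal_re]
          positivity
    · -- z is not real
      have hstar : aeval ((starRingEnd ℂ) z) P = 0 := by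
        rw [aeval_star_rat, hzP, map_zero]
      have hstarne : (starRingEnd ℂ) z ≠ 0 := by simpa using hzne
      have hsinv : aeval (((starRingEnd ℂ) z)⁻¹) P = 0 := aeval_inv_root hrev hstarne hstar
      have hmem2 : (((starRingEnd ℂ) z)⁻¹) ∈ conjugatesC τ := (mem_conjugatesC_iff hτQ _).mpr hsinv
      have hne2 : (((starRingEnd ℂ) z)⁻¹) ≠ (τ:ℂ) := by
        intro h
        have h3 : (starRingEnd ℂ) z = ((τ:ℂ))⁻¹ := by rw [← h, inv_inv]
        apply him
        have h4 := congrArg Complex.im h3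
        have h5 : ((τ:ℂ))⁻¹ = ((τ⁻¹ : ℝ) : ℂ) := by push_cast; ring
        rw [h5] at h4
        simp only [Complex.conj_im, Complex.ofReal_im] at h4
        linarith
      have habs2 : ‖(((starRingEnd ℂ) z)⁻¹)‖ ≤ 1 := hbound _ hmem2 hne2
      rw [norm_inv, Complex.norm_conj] at habs2
      have h0 : 0 < ‖z‖ := norm_pos_iff.mpr hzne
      have habseq : ‖z‖ = 1 := by
        have : 1 ≤ ‖z‖ := by
          rw [inv_le_one_iff₀] at habs2
          rcases habs2 with h' | h'
          · linarith
          · exact h'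
        linarith
      have hzinvstar : z⁻¹ = (starRingEnd ℂ) z := by
        symm
        apply eq_inv_of_mul_eq_one_right
        rw [Complex.mul_conj]
        norm_cast
        rw [Complex.normSq_eq_norm_sq, habseq]
        norm_num
      rw [hzinvstar]
      constructor
      · simp
      · simp only [Complex.add_re, Complex.conj_re, Complex.re_ofNat]
        have h1 : z.re^2 + z.im^2 = 1 := by
          have h2 := congrArg (fun t => t^2) habseq
          simp only [Complex.sq_norm] at h2
          rw [Complex.normSq_apply] at h2
          nlinarith [h2]
        nlinarith [sq_pos_of_ne_zero him, sq_nonneg (z.re + 1)]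


/-- A totally positive algebraic integer: all its Galois conjugates are real and positive. -/
def IsTotallyPositiveAlgInt (θ : ℝ) : Prop :=
  IsIntegral ℤ θ ∧ ∀ z ∈ conjugatesC θ, z.im = 0 ∧ 0 < z.re

/-- If `τ` is a Salem number of degree `d` and trace `-T`, then `τ + 1/τ + 2` is a
totally positive algebraic integer of degree `d/2` and trace `d - T`. -/
theorem salem_shift_totally_positive (τ : ℝ) (d : ℕ) (T : ℤ)
    (hτ : IsSalem τ) (hd : (minpoly ℚ τ).natDegree = d) (hT : traceQ τ = -(T : ℚ)) :
    IsTotallyPositiveAlgInt (τ + 1 / τ + 2) ∧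
      (minpoly ℚ (τ + 1 / τ + 2)).natDegree = d / 2 ∧
      traceQ (τ + 1 / τ + 2) = (d : ℚ) - (T : ℚ) := by
  rw [one_div]
  obtain ⟨hint, hτ1, hbound, hex⟩ := hτ
  have hτ0 : (0:ℝ) < τ := lt_trans one_pos hτ1
  have hτne : τ ≠ 0 := ne_of_gt hτ0
  have hτQ : IsIntegral ℚ τ := hint.tower_top
  obtain ⟨hrev, hc0⟩ := salem_reverse ⟨hint, hτ1, hbound, hex⟩ hτQ
  have hinvint : IsIntegral ℤ τ⁻¹ := inv_isIntegral hint hτne hc0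
  have h2int : IsIntegral ℤ (2:ℝ) := by
    simpa using (isIntegral_algebraMap : IsIntegral ℤ ((algebraMap ℤ ℝ) 2))
  have hθint : IsIntegral ℤ (τ + τ⁻¹ + 2) := (hint.add hinvint).add h2int
  have hθQ : IsIntegral ℚ (τ + τ⁻¹ + 2) := hθint.tower_top
  have hm1 : 1 ≤ (minpoly ℚ (τ + τ⁻¹ + 2)).natDegree := minpoly.natDegree_pos hθQ
  set Q : ℚ[X] := minpoly ℚ (τ + τ⁻¹ + 2) with hQdef
  set m : ℕ := Q.natDegree with hmdef
  have hQmonic : Q.Monic := minpoly.monic hθQ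
  obtain ⟨htrfmonic, htrfdeg⟩ := trf_monic Q m hQmonic rfl
  have hPdvd : minpoly ℚ τ ∣ trf Q m := minpoly.dvd ℚ τ (by
    rw [aeval_trf Q m le_rfl hτne, hQdef, minpoly.aeval, mul_zero])
  have hDle : (minpoly ℚ τ).natDegree ≤ 2*m := by
    have h := Polynomial.natDegree_le_of_dvd hPdvd htrfmonic.ne_zero
    rwa [htrfdeg] at h
  have hDeq : (minpoly ℚ τ).natDegree = 2*m := salem_deg_eq hτQ hτ1 hrev hθQ hDle
  have hPeq : minpoly ℚ τ = trf Q m := by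
    obtain ⟨g3, hg3⟩ := hPdvd
    have hg3ne : g3 ≠ 0 := by
      intro h; rw [h, mul_zero] at hg3; exact htrfmonic.ne_zero hg3
    have hdeg3 : g3.natDegree = 0 := by
      have h9 := htrfdeg
      rw [hg3, natDegree_mul (minpoly.ne_zero hτQ) hg3ne, hDeq] at h9
      omega
    obtain ⟨c3, hc3⟩ := natDegree_eq_zero.mp hdeg3
    have hlc : (1:ℚ) = c3 := by
      have h8 := congrArg leadingCoeff hg3
      rw [htrfmonic.leadingCoeff, ← hc3, leadingCoeff_mul, (minpoly.monic hτQ).leadingCoeff,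
        one_mul, leadingCoeff_C] at h8
      exact h8
    rw [hg3, ← hc3, ← hlc, map_one, mul_one]
  refine ⟨⟨hθint, salem_conj_pos ⟨hint, hτ1, hbound, hex⟩ hτQ hθQ hrev hPeq⟩, ?_, ?_⟩
  · omega
  · have hcoeffP : (minpoly ℚ τ).coeff ((minpoly ℚ τ).natDegree - 1) = (T:ℚ) :=
      neg_injective hT
    have hnext : (trf Q m).coeff (2*m - 1) = (2*m : ℚ) * Q.coeff m + Q.coeff (m-1) :=
      trf_coeff_next Q m hm1
    have hQm : Q.coeff m = 1 := hQmonic.coeff_natDegree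
    rw [hDeq, hPeq, hnext, hQm, mul_one] at hcoeffP
    have hd2m : (d:ℚ) = 2*(m:ℚ) := by
      have : d = 2*m := by omega
      rw [this]; push_cast; ring
    unfold traceQ
    rw [← hQdef, ← hmdef]
    linarith [hcoeffP, hd2m]
end

section
/- If f(x) = Σ_{j=1}^{d} λ_j/(x − α_j) where λ_1, …, λ_d > 0 and α_1 < α_2 < ⋯ < α_d are real, then f can be written in the form f(x) = γ·∏_{j=1}^{d−1}(x − β_j) / ∏_{j=1}^{d}(x − α_j) for some γ > 0 and real numbers β_1, …, β_{d−1} that strictly interlace the α_j, i.e. α_1 < β_1 < α_2 < β_2 < ⋯ < β_{d−1} < α_d. -/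
/-!
Clearing denominators, `∑ λⱼ / (x - αⱼ) = P(x) / ∏ⱼ (x - αⱼ)` with `P = ∑ⱼ λⱼ ∏_{k ≠ j} (X - αₖ)`,
a polynomial of degree `≤ d - 1` with coefficient `∑ λⱼ > 0` in degree `d - 1`. At a pole `αᵢ` only
the `i`-th term of `P` survives, so `P(αᵢ) = λᵢ ∏_{k ≠ i} (αᵢ - αₖ)` has sign `(-1)^(d-1-i)`.
Hence `P` changes sign on each interval `(αᵢ, αᵢ₊₁)` and has a root `βᵢ` there. These are `d - 1`
distinct roots of a polynomial of degree `≤ d - 1`, so `P = (∑ λⱼ) ∏ᵢ (X - βᵢ)`.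
-/

open Polynomial Finset Lagrange

section PartialFractionNumerator

variable {R ι : Type*} [CommRing R] [DecidableEq ι] (s : Finset ι) (v lam : ι → R)

noncomputable def partialFractionNumerator : R[X] :=
  ∑ j ∈ s, C (lam j) * nodal (s.erase j) v

theorem eval_partialFractionNumerator_node {i : ι} (hi : i ∈ s) :
    (partialFractionNumerator s v lam).eval (v i) =
      lam i * (nodal (s.erase i) v).eval (v i) := by
  rw [partialFractionNumerator, eval_finsetSum, sum_eq_single_of_mem i hi, eval_mul, eval_C]
  intro j _ hji
  rw [eval_mul, eval_nodal_at_node (mem_erase.2 ⟨hji.symm, hi⟩), mul_zero]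

variable [Nontrivial R]

theorem natDegree_partialFractionNumerator_le :
    (partialFractionNumerator s v lam).natDegree ≤ #s - 1 :=
  natDegree_sum_le_of_forall_le _ _ fun j hj =>
    (natDegree_C_mul_le _ _).trans (by rw [natDegree_nodal, card_erase_of_mem hj])

theorem coeff_partialFractionNumerator :
    (partialFractionNumerator s v lam).coeff (#s - 1) = ∑ j ∈ s, lam j := by
  rw [partialFractionNumerator, finsetSum_coeff]
  refine sum_congr rfl fun j hj => ?_
  rw [coeff_C_mul, ← card_erase_of_mem hj, ← natDegree_nodal (v := v),
    nodal_monic.coeff_natDegree, mul_one]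

end PartialFractionNumerator

theorem sum_div_sub_eq_eval_partialFractionNumerator_div {F ι : Type*} [Field F] [DecidableEq ι]
    (s : Finset ι) (v lam : ι → F) {x : F} (hx : ∀ i ∈ s, x ≠ v i) :
    ∑ j ∈ s, lam j / (x - v j) =
      (partialFractionNumerator s v lam).eval x / (nodal s v).eval x := by
  have hne : ∀ j ∈ s, x - v j ≠ 0 := fun j hj => sub_ne_zero.2 (hx j hj)
  rw [eq_div_iff (by rw [eval_nodal]; exact prod_ne_zero_iff.2 hne), sum_mul,
    partialFractionNumerator, eval_finsetSum]
  refine sum_congr rfl fun j hj => ?_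
  rw [nodal_eq_mul_nodal_erase hj, eval_mul, eval_mul, eval_C, eval_sub, eval_X, eval_C]
  field_simp [hne j hj]

theorem eq_C_coeff_mul_nodal_of_eval_eq_zero {R ι : Type*} [CommRing R] [IsDomain R]
    {s : Finset ι} {v : ι → R} (hv : Set.InjOn v s) {p : R[X]} (hdeg : p.natDegree ≤ #s)
    (hroot : ∀ i ∈ s, p.eval (v i) = 0) :
    p = C (p.coeff #s) * nodal s v := by
  classical
  refine eq_of_degree_sub_lt_of_eval_finset_eq (s.image v) ?_ ?_
  · rw [card_image_of_injOn hv, degree_lt_iff_coeff_zero]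
    intro m hm
    rw [coeff_sub, coeff_C_mul]
    rcases hm.eq_or_lt with rfl | hlt
    · rw [← natDegree_nodal (v := v), nodal_monic.coeff_natDegree, mul_one, sub_self]
    · rw [coeff_eq_zero_of_natDegree_lt (hdeg.trans_lt hlt),
        coeff_eq_zero_of_natDegree_lt (p := nodal s v) (by rwa [natDegree_nodal]),
        mul_zero, sub_zero]
  · simp only [mem_image, forall_exists_index, and_imp, forall_apply_eq_imp_iff₂]
    intro i hi
    rw [hroot i hi, eval_mul, eval_nodal_at_node hi, mul_zero]

theorem neg_one_pow_card_mul_eval_nodal_pos {ι : Type*} (s : Finset ι) (v : ι → ℝ) {x : ℝ}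
    (hx : ∀ i ∈ s, x ≠ v i) :
    0 < (-1) ^ #{k ∈ s | x < v k} * (nodal s v).eval x := by
  have hsign : (-1 : ℝ) ^ #{k ∈ s | x < v k} = ∏ k ∈ s, if x < v k then -1 else 1 := by
    rw [prod_ite, prod_const, prod_const_one, mul_one]
  rw [hsign, eval_nodal, ← prod_mul_distrib]
  refine prod_pos fun k hk => ?_
  split_ifs with hlt
  · linarith
  · linarith [lt_of_le_of_ne (not_lt.1 hlt) (hx k hk).symm]

theorem exists_mem_Ioo_eval_eq_zero_of_mul_neg {p : ℝ[X]} {a b : ℝ} (hab : a < b)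
    (h : p.eval a * p.eval b < 0) : ∃ x ∈ Set.Ioo a b, p.eval x = 0 := by
  have hcont : ContinuousOn (fun x => p.eval x) (Set.Icc a b) := p.continuous.continuousOn
  rcases mul_neg_iff.1 h with ⟨ha, hb⟩ | ⟨ha, hb⟩
  · exact intermediate_value_Ioo' hab.le hcont ⟨hb, ha⟩
  · exact intermediate_value_Ioo hab.le hcont ⟨ha, hb⟩

theorem strictMonoOn_Iio_of_lt_succ {α β : Type*} [PartialOrder α] [SuccOrder α]
    [IsSuccArchimedean α] [Preorder β] {f : α → β} {n : α}
    (hf : ∀ m, Order.succ m < n → f m < f (Order.succ m)) : StrictMonoOn f (Set.Iio n) :=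
  strictMonoOn_of_lt_succ Set.ordConnected_Iio fun m _ _ hm => hf m hm

section Interlacing

variable {d : ℕ} {α lam : ℕ → ℝ}

theorem neg_one_pow_mul_eval_partialFractionNumerator_pos (hα : StrictMonoOn α (Set.Iio d))
    (hlam : ∀ j < d, 0 < lam j) {i : ℕ} (hi : i < d) :
    0 < (-1) ^ (d - 1 - i) * (partialFractionNumerator (range d) α lam).eval (α i) := by
  have hfilter : {k ∈ (range d).erase i | α i < α k} = Ioo i d := by
    ext k
    simp only [mem_filter, mem_erase, mem_range, mem_Ioo]
    constructor
    · rintro ⟨⟨-, hk⟩, hlt⟩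
      exact ⟨(hα.lt_iff_lt hi hk).1 hlt, hk⟩
    · rintro ⟨hik, hk⟩
      exact ⟨⟨hik.ne', hk⟩, hα hi hk hik⟩
  have hcount : #{k ∈ (range d).erase i | α i < α k} = d - 1 - i := by
    rw [hfilter, Nat.card_Ioo]
    omega
  have hnodal := neg_one_pow_card_mul_eval_nodal_pos ((range d).erase i) α (x := α i)
    fun k hk => hα.injOn.ne hi (mem_range.1 (mem_erase.1 hk).2) (mem_erase.1 hk).1.symm
  rw [hcount] at hnodal
  rw [eval_partialFractionNumerator_node _ _ _ (mem_range.2 hi), mul_left_comm]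
  exact mul_pos (hlam i hi) hnodal

theorem exists_mem_Ioo_eval_partialFractionNumerator_eq_zero (hα : StrictMonoOn α (Set.Iio d))
    (hlam : ∀ j < d, 0 < lam j) {i : ℕ} (hi : i + 1 < d) :
    ∃ b ∈ Set.Ioo (α i) (α (i + 1)), (partialFractionNumerator (range d) α lam).eval b = 0 := by
  have hleft := neg_one_pow_mul_eval_partialFractionNumerator_pos hα hlam (i := i) (by omega)
  have hright := neg_one_pow_mul_eval_partialFractionNumerator_pos hα hlam hi
  rw [show d - 1 - i = d - 1 - (i + 1) + 1 by omega, pow_succ] at hleft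
  refine exists_mem_Ioo_eval_eq_zero_of_mul_neg
    (hα (show i < d by omega) hi i.lt_succ_self) ?_
  rcases neg_one_pow_eq_or ℝ (d - 1 - (i + 1)) with hs | hs <;> rw [hs] at hleft hright <;>
    nlinarith

end Interlacing

/-- Converse of the interlacing lemma: if `f(x) = Σ_{j<d} λ j / (x - α j)` with all `λ j > 0`
and `α 0 < α 1 < ⋯ < α (d-1)`, then `f` can be written as
`γ ∏_{j<d-1}(x - β j) / ∏_{j<d}(x - α j)` for some `γ > 0` and reals `β j` strictly
interlacing the `α j`. -/
theorem interlacing_lemma_converse (d : ℕ) (hd : 0 < d) (α lam : ℕ → ℝ)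
    (hlam : ∀ j < d, 0 < lam j)
    (hα : ∀ j, j + 1 < d → α j < α (j + 1))
    (f : ℝ → ℝ)
    (hf : ∀ x, f x = ∑ j ∈ Finset.range d, lam j / (x - α j)) :
    ∃ γ : ℝ, 0 < γ ∧ ∃ β : ℕ → ℝ,
      (∀ j, j + 1 < d → α j < β j ∧ β j < α (j + 1)) ∧
      ∀ x, (∀ j < d, x ≠ α j) →
        f x = γ * (∏ j ∈ Finset.range (d - 1), (x - β j)) / ∏ j ∈ Finset.range d, (x - α j) := by
  have hmono : StrictMonoOn α (Set.Iio d) := strictMonoOn_Iio_of_lt_succ hα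
  choose! β hβ using fun i (hi : i + 1 < d) =>
    exists_mem_Ioo_eval_partialFractionNumerator_eq_zero hmono hlam hi
  have hβ_inj : Set.InjOn β (range (d - 1)) := by
    refine StrictMonoOn.injOn fun j hj k hk hjk => ?_
    simp only [coe_range, Set.mem_Iio] at hj hk
    calc β j < α (j + 1) := (hβ j (by omega)).1.2
      _ ≤ α k := hmono.monotoneOn (show j + 1 < d by omega) (show k < d by omega) hjk
      _ < β k := (hβ k (by omega)).1.1
  have hcoeff := coeff_partialFractionNumerator (range d) α lam
  have hdeg := natDegree_partialFractionNumerator_le (range d) α lam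
  rw [card_range] at hcoeff hdeg
  have hP : partialFractionNumerator (range d) α lam =
      C (∑ j ∈ range d, lam j) * nodal (range (d - 1)) β := by
    have hroots := eq_C_coeff_mul_nodal_of_eval_eq_zero hβ_inj (by rwa [card_range])
      fun j hj => (hβ j (by simp only [mem_range] at hj; omega)).2
    rwa [card_range, hcoeff] at hroots
  refine ⟨∑ j ∈ range d, lam j,
    sum_pos (fun j hj => hlam j (mem_range.1 hj)) (nonempty_range_iff.2 hd.ne'),
    β, fun j hj => (hβ j hj).1, fun x hx => ?_⟩
  rw [hf, sum_div_sub_eq_eval_partialFractionNumerator_div _ _ _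
    fun j hj => hx j (mem_range.1 hj), hP, eval_mul, eval_C, eval_nodal, eval_nodal]
end

section
/- Consider a system of linear equations Σ_{i=1}^{N} a_{ℓi}·u_i = 0 (ℓ = 1, …, L) with rational coefficients a_{ℓi}. If (u_1, …, u_N) is a nondegenerate solution in which every u_i is a root of unity, then there is a single root of unity ζ such that every u_i/ζ is a P_N-th root of unity, where P_N denotes the product of all primes up to N. -/
/-!
Mann's argument. Splitting each equation into minimal vanishing subsums, it suffices to show
that the terms of a minimal vanishing sum `∑ cᵢ wᵢ = 0` of `n` roots of unity, normalised by
`wⱼ = 1`, are `P_n`-th roots of unity. Let `wᵢ ^ (p * q) = 1` with `p` prime and `p ∣ q` or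
`p > n`. The conjugations `ζ ↦ ζ ^ (1 + q u)` of `ℚ(ζ_{pq})` multiply `wᵢ` by `θᵢ ^ u`, where
`θᵢ = wᵢ ^ q` is a `p`-th root of unity; averaging over `u` against the characters of `μ_p`
shows that the subsum over `θᵢ = 1` vanishes (for `p > n` because some `p`-th root of unity is
missed by the `θᵢ`). By minimality it is the whole sum, so the exponent `p * q` can be lowered
to `q`, down to a divisor of `P_n`. Nondegeneracy then puts all `uᵢ` into one class.
-/

open Polynomial Finset

namespace Nat

theorem coprime_one_add_mul_prime_mul {p q u : ℕ} (hp : p.Prime) (h : ¬ p ∣ 1 + q * u) :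
    (1 + q * u).Coprime (p * q) :=
  Coprime.mul_right (hp.coprime_iff_not_dvd.2 h).symm (by simp)

theorem exists_dvd_one_add_mul {p q : ℕ} (hp : p.Prime) (h : ¬ p ∣ q) : ∃ u, p ∣ 1 + q * u := by
  have := Fact.mk hp
  have hq : (q : ZMod p) ≠ 0 := by rwa [Ne, ZMod.natCast_eq_zero_iff]
  refine ⟨(-(q : ZMod p)⁻¹).val, ?_⟩
  rw [← ZMod.natCast_eq_zero_iff]
  push_cast
  rw [ZMod.natCast_zmod_val, mul_neg, mul_inv_cancel₀ hq, add_neg_cancel]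

theorem exists_prime_of_not_dvd_primorial {m n : ℕ} (h : ¬ m ∣ primorial n) :
    ∃ p q, p.Prime ∧ m = p * q ∧ (p ∣ q ∨ n < p) := by
  contrapose! h
  have hsq : Squarefree m := by
    refine squarefree_iff_prime_squarefree.2 fun p hp ⟨k, hk⟩ => ?_
    exact (h p (p * k) hp (by rw [hk, mul_assoc])).1 (dvd_mul_right p k)
  rw [← prod_primeFactors_of_squarefree hsq, primorial_eq_prod_primesLE]
  refine prod_dvd_prod_of_subset _ _ _ fun p hp => mem_primesLE.2 ⟨?_, prime_of_mem_primeFactors hp⟩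
  exact (h p (m / p) (prime_of_mem_primeFactors hp)
    (Nat.mul_div_cancel' (dvd_of_mem_primeFactors hp)).symm).2

end Nat

/-- Galois conjugation `ζ ↦ ζ ^ t`: `ζ` and `ζ ^ t` have the same minimal polynomial over `ℚ`,
the `m`-th cyclotomic polynomial. -/
theorem sum_mul_pow_eq_zero_of_coprime {K : Type*} [Field K] [CharZero K] {m t : ℕ} {ζ : K}
    (hζ : IsPrimitiveRoot ζ m) (hm : 0 < m) (ht : t.Coprime m) {ι : Type*} {S : Finset ι}
    (c : ι → ℚ) {w : ι → K} (hw : ∀ i ∈ S, w i ^ m = 1) (h : ∑ i ∈ S, (c i : K) * w i = 0) :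
    ∑ i ∈ S, (c i : K) * w i ^ t = 0 := by
  have : NeZero m := ⟨hm.ne'⟩
  choose! e he using fun i hi => hζ.eq_pow_of_pow_eq_one (hw i hi)
  set P : ℚ[X] := ∑ i ∈ S, C (c i) * X ^ e i
  have hP : ∀ z : K, aeval z P = ∑ i ∈ S, (c i : K) * z ^ e i := by simp [P]
  have hPζ : aeval ζ P = 0 := by
    rw [hP, ← h]
    exact sum_congr rfl fun i hi => by rw [(he i hi).2]
  have hPζt : aeval (ζ ^ t) P = 0 := by
    rw [← minpoly.dvd_iff, ← cyclotomic_eq_minpoly_rat (hζ.pow_of_coprime t ht) hm,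
      cyclotomic_eq_minpoly_rat hζ hm]
    exact minpoly.dvd ℚ ζ hPζ
  rw [hP] at hPζt
  rw [← hPζt]
  exact sum_congr rfl fun i hi => by rw [← (he i hi).2, pow_right_comm]

theorem geom_sum_div_eq_ite {K : Type*} [Field K] [DecidableEq K] {n : ℕ} (hn : 0 < n) {x y : K}
    (hx : x ^ n = 1) (hy : y ^ n = 1) :
    ∑ k ∈ range n, (x / y) ^ k = if x = y then (n : K) else 0 := by
  have hy0 : y ≠ 0 := by rintro rfl; simp [hn.ne'] at hy
  split_ifs with h
  · simp [h, hy0]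
  · rw [geom_sum_eq (by rwa [Ne, div_eq_one_iff_eq hy0]), div_pow, hx, hy, div_one, sub_self,
      zero_div]

theorem natCast_mul_sum_filter_eq_sum {K : Type*} [Field K] [DecidableEq K] {p : ℕ} (hp : 0 < p)
    {ι : Type*} {S : Finset ι} {f θ : ι → K} {ρ : K} (hθ : ∀ i ∈ S, θ i ^ p = 1) (hρ : ρ ^ p = 1)
    (h : ∀ k, 0 < k → k < p → ∑ i ∈ S, f i * θ i ^ k = 0) :
    (p : K) * ∑ i ∈ S with θ i = ρ, f i = ∑ i ∈ S, f i := by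
  calc (p : K) * ∑ i ∈ S with θ i = ρ, f i
      = ∑ i ∈ S, f i * ∑ k ∈ range p, (θ i / ρ) ^ k := by
        rw [mul_sum, sum_filter]
        refine sum_congr rfl fun i hi => ?_
        rw [geom_sum_div_eq_ite hp (hθ i hi) hρ]
        split_ifs <;> ring
    _ = ∑ k ∈ range p, (∑ i ∈ S, f i * θ i ^ k) / ρ ^ k := by
        simp_rw [mul_sum, sum_div, div_pow, mul_div_assoc]
        exact sum_comm
    _ = ∑ i ∈ S, f i := by
        obtain ⟨p, rfl⟩ := Nat.exists_eq_add_of_lt hp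
        rw [zero_add, sum_range_succ', sum_eq_zero fun k hk => by
          rw [h (k + 1) k.succ_pos (by simpa using hk), zero_div]]
        simp

theorem exists_pow_eq_one_forall_ne {p : ℕ} (hp : 0 < p) {ι : Type*} {S : Finset ι} (θ : ι → ℂ)
    (hS : #S < p) : ∃ ρ : ℂ, ρ ^ p = 1 ∧ ∀ i ∈ S, θ i ≠ ρ := by
  classical
  have hcard : #(S.image θ) < #(nthRootsFinset p (1 : ℂ)) := by
    rw [(Complex.isPrimitiveRoot_exp p hp.ne').card_nthRootsFinset]
    exact card_image_le.trans_lt hS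
  obtain ⟨ρ, hρ, hρS⟩ := exists_mem_notMem_of_card_lt_card hcard
  exact ⟨ρ, (mem_nthRootsFinset hp 1).1 hρ, fun i hi h => hρS (mem_image.2 ⟨i, hi, h⟩)⟩

theorem sum_eq_zero_of_card_lt {p : ℕ} (hp : 0 < p) {ι : Type*} {S : Finset ι} {f θ : ι → ℂ}
    (hθ : ∀ i ∈ S, θ i ^ p = 1) (hS : #S < p)
    (h : ∀ k, 0 < k → k < p → ∑ i ∈ S, f i * θ i ^ k = 0) :
    ∑ i ∈ S, f i = 0 := by
  classical
  obtain ⟨ρ, hρ, hρS⟩ := exists_pow_eq_one_forall_ne hp θ hS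
  rw [← natCast_mul_sum_filter_eq_sum hp hθ hρ h, filter_false_of_mem hρS, sum_empty, mul_zero]

section MinimalVanishingSum

variable {ι : Type*}

def IsMinimalVanishingSum (S : Finset ι) (c : ι → ℚ) (w : ι → ℂ) : Prop :=
  ∑ i ∈ S, (c i : ℂ) * w i = 0 ∧ ∀ T ⊆ S, T.Nonempty → ∑ i ∈ T, (c i : ℂ) * w i = 0 → T = S

namespace IsMinimalVanishingSum

variable {S : Finset ι} {c : ι → ℚ} {w : ι → ℂ}

theorem pow_eq_one_of_prime (hS : IsMinimalVanishingSum S c w) {j : ι} (hj : j ∈ S)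
    (hwj : w j = 1) {p q : ℕ} (hp : p.Prime) (hw : ∀ i ∈ S, w i ^ (p * q) = 1)
    (hpq : p ∣ q ∨ #S < p) : ∀ i ∈ S, w i ^ q = 1 := by
  classical
  rcases q.eq_zero_or_pos with rfl | hq
  · simp
  set θ : ι → ℂ := fun i => w i ^ q
  have hθ : ∀ i ∈ S, θ i ^ p = 1 := fun i hi => by rw [← pow_mul, mul_comm, hw i hi]
  -- Galois conjugation by `t = 1 + q * u` multiplies each `w i` by `θ i ^ u`.
  have hconj : ∀ u, ¬ p ∣ 1 + q * u → ∑ i ∈ S, (c i : ℂ) * w i * θ i ^ u = 0 := fun u hu => by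
    have hpq0 : 0 < p * q := Nat.mul_pos hp.pos hq
    simpa [θ, pow_add, pow_mul, mul_assoc] using sum_mul_pow_eq_zero_of_coprime
      (Complex.isPrimitiveRoot_exp _ hpq0.ne') hpq0 (Nat.coprime_one_add_mul_prime_mul hp hu) c hw
      hS.1
  obtain ⟨u, hshift, hsum⟩ : ∃ u, (∀ k, 0 < k → k < p →
      ∑ i ∈ S, (c i : ℂ) * w i * θ i ^ u * θ i ^ k = 0) ∧
      ∑ i ∈ S, (c i : ℂ) * w i * θ i ^ u = 0 := by
    -- If `p ∤ q`, exactly one residue `u` mod `p` gives no conjugation; we shift by it.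
    by_cases hpq' : p ∣ q
    · refine ⟨0, fun k _ _ => ?_, by simpa using hS.1⟩
      have hk : ¬ p ∣ 1 + q * k := by
        rw [Nat.dvd_add_left (dvd_mul_of_dvd_left hpq' k)]
        exact hp.not_dvd_one
      simpa using hconj k hk
    obtain ⟨u, hu⟩ := Nat.exists_dvd_one_add_mul hp hpq'
    have hshift : ∀ k, 0 < k → k < p → ∑ i ∈ S, (c i : ℂ) * w i * θ i ^ u * θ i ^ k = 0 := by
      intro k hk hkp
      have hk' : ¬ p ∣ 1 + q * (u + k) := by
        rw [mul_add, ← add_assoc, Nat.dvd_add_right hu, hp.dvd_mul, not_or]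
        exact ⟨hpq', Nat.not_dvd_of_pos_of_lt hk hkp⟩
      simpa [pow_add, mul_assoc] using hconj (u + k) hk'
    exact ⟨u, hshift, sum_eq_zero_of_card_lt hp.pos hθ (hpq.resolve_left hpq') hshift⟩
  have hclass : ∑ i ∈ S with θ i = 1, (c i : ℂ) * w i = 0 := by
    have h := natCast_mul_sum_filter_eq_sum hp.pos hθ (one_pow p) hshift
    rw [hsum, mul_eq_zero, Nat.cast_eq_zero] at h
    rw [← h.resolve_left hp.ne_zero]
    exact sum_congr rfl fun i hi => by rw [(mem_filter.1 hi).2, one_pow, mul_one]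
  have hfull := hS.2 _ (filter_subset _ S) ⟨j, mem_filter.2 ⟨hj, by simp [θ, hwj]⟩⟩ hclass
  intro i hi
  rw [← hfull] at hi
  exact (mem_filter.1 hi).2

theorem pow_primorial_eq_one (hS : IsMinimalVanishingSum S c w)
    (hw : ∀ i ∈ S, IsOfFinOrder (w i)) {j : ι} (hj : j ∈ S) (hwj : w j = 1) :
    ∀ i ∈ S, w i ^ primorial #S = 1 := by
  suffices ∀ m, 0 < m → (∀ i ∈ S, w i ^ m = 1) → ∀ i ∈ S, w i ^ primorial #S = 1 from
    this (∏ i ∈ S, orderOf (w i)) (prod_pos fun i hi => (hw i hi).orderOf_pos)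
      fun i hi => orderOf_dvd_iff_pow_eq_one.1 (dvd_prod_of_mem _ hi)
  intro m
  induction m using Nat.strong_induction_on with
  | _ m ih =>
    intro hm hwm
    by_cases hdvd : m ∣ primorial #S
    · obtain ⟨d, hd⟩ := hdvd
      intro i hi
      rw [hd, pow_mul, hwm i hi, one_pow]
    obtain ⟨p, q, hp, rfl, hpq⟩ := Nat.exists_prime_of_not_dvd_primorial hdvd
    have hq : 0 < q := Nat.pos_of_mul_pos_left hm
    exact ih q (lt_mul_left hq hp.one_lt) hq (hS.pow_eq_one_of_prime hj hwj hp hwm hpq)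

theorem div_const (hS : IsMinimalVanishingSum S c w) {z : ℂ} (hz : z ≠ 0) :
    IsMinimalVanishingSum S c (fun i => w i / z) := by
  have hdiv : ∀ T : Finset ι, ∑ i ∈ T, (c i : ℂ) * (w i / z) = (∑ i ∈ T, (c i : ℂ) * w i) / z :=
    fun T => by simp only [sum_div, mul_div_assoc]
  simp only [IsMinimalVanishingSum, hdiv, div_eq_zero_iff, hz, or_false]
  exact hS

theorem div_pow_primorial_eq_one (hS : IsMinimalVanishingSum S c w)
    (hw : ∀ i ∈ S, IsOfFinOrder (w i)) {i j : ι} (hi : i ∈ S) (hj : j ∈ S) :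
    (w i / w j) ^ primorial #S = 1 := by
  have hwj : w j ≠ 0 := (hw j hj).isUnit.ne_zero
  refine (hS.div_const hwj).pow_primorial_eq_one (fun k hk => ?_) hj (div_self hwj) i hi
  obtain ⟨a, ha, hwa⟩ := isOfFinOrder_iff_pow_eq_one.1 (hw k hk)
  obtain ⟨b, hb, hwb⟩ := isOfFinOrder_iff_pow_eq_one.1 (hw j hj)
  refine isOfFinOrder_iff_pow_eq_one.2 ⟨a * b, Nat.mul_pos ha hb, ?_⟩
  rw [div_pow, pow_mul, hwa, pow_mul', hwb, one_pow, one_pow, div_one]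

theorem sum_filter_div_pow_primorial_eq_zero (hS : IsMinimalVanishingSum S c w)
    (hw : ∀ i ∈ S, IsOfFinOrder (w i)) {N : ℕ} (hN : #S ≤ N) (j : ι) :
    ∑ i ∈ S with (w i / w j) ^ primorial N = 1, (c i : ℂ) * w i = 0 := by
  by_cases hclass : ∃ k ∈ S, (w k / w j) ^ primorial N = 1
  · obtain ⟨k, hk, hkj⟩ := hclass
    obtain ⟨d, hd⟩ := primorial_dvd_primorial hN
    have hwk : w k ≠ 0 := (hw k hk).isUnit.ne_zero
    rw [filter_true_of_mem fun i hi => ?_]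
    · exact hS.1
    rw [← div_mul_div_cancel₀ hwk, mul_pow, hkj, mul_one, hd, pow_mul,
      hS.div_pow_primorial_eq_one hw hi hk, one_pow]
  · simp only [not_exists, not_and] at hclass
    rw [filter_false_of_mem hclass, sum_empty]

end IsMinimalVanishingSum

theorem sum_filter_div_pow_primorial_eq_zero {S : Finset ι} {c : ι → ℚ} {w : ι → ℂ}
    (hw : ∀ i ∈ S, IsOfFinOrder (w i)) {N : ℕ} (hN : #S ≤ N)
    (hsum : ∑ i ∈ S, (c i : ℂ) * w i = 0) (j : ι) :
    ∑ i ∈ S with (w i / w j) ^ primorial N = 1, (c i : ℂ) * w i = 0 := by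
  classical
  induction S using Finset.strongInduction with
  | H S ih =>
    by_cases hS : IsMinimalVanishingSum S c w
    · exact hS.sum_filter_div_pow_primorial_eq_zero hw hN j
    simp only [IsMinimalVanishingSum, hsum, true_and, not_forall] at hS
    obtain ⟨T, hTS, hT, hTsum, hTS'⟩ := hS
    have hsdiff : ∑ i ∈ S \ T, (c i : ℂ) * w i = 0 := by
      rw [sum_sdiff_eq_sub hTS, hsum, hTsum, sub_zero]
    have hsub : T ⊂ S := ssubset_of_subset_of_ne hTS hTS'
    rw [← union_sdiff_of_subset hTS, filter_union,
      sum_union (disjoint_filter_filter disjoint_sdiff),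
      ih T hsub (fun i hi => hw i (hTS hi)) ((card_le_card hTS).trans hN) hTsum,
      ih (S \ T) (sdiff_ssubset hTS hT) (fun i hi => hw i (sdiff_subset hi))
        ((card_le_card sdiff_subset).trans hN) hsdiff, add_zero]

end MinimalVanishingSum

/-- If `(u 0, …, u (N-1))` is a nondegenerate solution, consisting of roots of unity, of the
linear system `Σ_i a ℓ i * u i = 0` (`ℓ < L`), then up to a common factor of proportionality
(a root of unity `ζ`) the `u i` are all `P_N`-th roots of unity, where `P_N` is the product
of all primes up to `N` (the primorial of `N`). -/
theorem nondegenerate_root_of_unity_solution (L N : ℕ) (a : Fin L → Fin N → ℚ) (u : Fin N → ℂ)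
    (hu : ∀ i, ∃ k : ℕ, 0 < k ∧ u i ^ k = 1)
    (hsol : ∀ ℓ, ∑ i, (a ℓ i : ℂ) * u i = 0)
    (hnondeg : ¬ ∃ I : Finset (Fin N), I.Nonempty ∧ I ≠ Finset.univ ∧
      ∀ ℓ, ∑ i ∈ I, (a ℓ i : ℂ) * u i = 0) :
    ∃ ζ : ℂ, (∃ k : ℕ, 0 < k ∧ ζ ^ k = 1) ∧ ∀ i, (u i / ζ) ^ primorial N = 1 := by
  rcases isEmpty_or_nonempty (Fin N) with _ | ⟨⟨i₀⟩⟩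
  · exact ⟨1, ⟨1, one_pos, one_pow 1⟩, isEmptyElim⟩
  have hfin : ∀ i, IsOfFinOrder (u i) := fun i => isOfFinOrder_iff_pow_eq_one.2 (hu i)
  refine ⟨u i₀, hu i₀, fun i => ?_⟩
  by_contra hi
  refine hnondeg ⟨univ.filter fun i => (u i / u i₀) ^ primorial N = 1,
    ⟨i₀, by simp [div_self (hfin i₀).isUnit.ne_zero]⟩, fun h => hi ?_, fun ℓ => ?_⟩
  · simpa using eq_univ_iff_forall.1 h i
  · exact sum_filter_div_pow_primorial_eq_zero (fun i _ => hfin i) (by simp) (hsol ℓ) i₀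
end

section
/- Let h(x_0, x_1, …, x_n) = 2(x_0² − 1)·∏_{i=1}^{n}(x_i − 1) − x_0·Σ_{j=1}^{n}(x_j + 1)·∏_{i≠j}(x_i − 1), defining a hypersurface h = 0 in G_m^{n+1}. Then the only maximal torsion cosets of this hypersurface on which the coordinate x_0 is nonconstant are the algebraic subgroups B_{ij} = { x ∈ G_m^{n+1} : x_i = x_j = 1 } for pairs of distinct indices i, j ∈ {1, …, n}, each of dimension n − 1. -/
/-- An `r`-dimensional subtorus of `G_m^n = (ℂ*)^n`: the subgroup of points
`x i = ∏_j (t j) ^ (E j i)` determined by an `r × n` integer matrix `E` of rank `r`. -/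
def IsSubtorusOfDim (n r : ℕ) (H : Set (Fin n → ℂˣ)) : Prop :=
  ∃ E : Matrix (Fin r) (Fin n) ℤ, (E.map (Int.cast : ℤ → ℚ)).rank = r ∧
    H = { x | ∃ t : Fin r → ℂˣ, ∀ i, x i = ∏ j, t j ^ E j i }

/-- A subtorus of `G_m^n` (of some dimension). -/
def IsSubtorus (n : ℕ) (H : Set (Fin n → ℂˣ)) : Prop :=
  ∃ r, IsSubtorusOfDim n r H

/-- A root of unity in `ℂˣ`. -/
def IsTorsionUnit (ω : ℂˣ) : Prop :=
  ∃ k : ℕ, 0 < k ∧ ω ^ k = 1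

/-- An `r`-dimensional torsion coset of `G_m^n`: a translate `ω H` of an `r`-dimensional
subtorus `H` by a torsion point `ω` (all coordinates roots of unity). -/
def IsTorsionCosetOfDim (n r : ℕ) (C : Set (Fin n → ℂˣ)) : Prop :=
  ∃ (ω : Fin n → ℂˣ) (H : Set (Fin n → ℂˣ)), IsSubtorusOfDim n r H ∧
    (∀ i, IsTorsionUnit (ω i)) ∧ C = (fun h => ω * h) '' H

/-- A torsion coset of `G_m^n` (of some dimension). -/
def IsTorsionCoset (n : ℕ) (C : Set (Fin n → ℂˣ)) : Prop :=
  ∃ r, IsTorsionCosetOfDim n r C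

/-- A maximal torsion coset of a variety `V ⊆ G_m^n`: a torsion coset contained in `V` that is
not properly contained in any other torsion coset contained in `V`. -/
def IsMaximalTorsionCosetOf (n : ℕ) (C V : Set (Fin n → ℂˣ)) : Prop :=
  IsTorsionCoset n C ∧ C ⊆ V ∧
    ∀ C', IsTorsionCoset n C' → C' ⊆ V → C ⊆ C' → C = C'

/-- `K` is an exponent of the torsion coset `C = ω H`: a multiple of the order of `ω H` in the
quotient group `G_m^n / H`, i.e. `ω ^ K ∈ H`. -/
def IsExponentOf (n : ℕ) (K : ℕ) (C : Set (Fin n → ℂˣ)) : Prop :=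
  ∃ (ω : Fin n → ℂˣ) (H : Set (Fin n → ℂˣ)), IsSubtorus n H ∧
    (∀ i, IsTorsionUnit (ω i)) ∧ C = (fun h => ω * h) '' H ∧ ω ^ K ∈ H

section Aux

open Polynomial Finset

/-! ### Auxiliary lemmas -/

lemma aux_exists_int_vec {r : ℕ} (S : Finset (Fin r → ℤ)) (hS : ∀ c ∈ S, c ≠ 0) :
    ∃ v : Fin r → ℤ, ∀ c ∈ S, ∑ j, v j * c j ≠ 0 := by
  set P : (Fin r → ℤ) → Polynomial ℚ := fun c => ∑ j, C ((c j : ℚ)) * X ^ (j : ℕ) with hP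
  have hPne : ∀ c ∈ S, P c ≠ 0 := by
    intro c hc
    obtain ⟨j0, hj0⟩ : ∃ j0, c j0 ≠ 0 := by
      by_contra h; push_neg at h; exact hS c hc (funext h)
    intro h0
    have hco : (P c).coeff (j0 : ℕ) = (c j0 : ℚ) := by
      rw [hP]; simp only [finset_sum_coeff, coeff_C_mul, coeff_X_pow]
      rw [Finset.sum_eq_single j0]
      · simp
      · intro b _ hb
        have hbn : ¬ ((b : ℕ) = (j0 : ℕ)) := fun h => hb (Fin.ext h)
        rw [if_neg (fun h => hbn h.symm), mul_zero]
      · simp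
    rw [h0] at hco
    simp only [coeff_zero] at hco
    exact hj0 (by exact_mod_cast hco.symm)
  have hfin : (⋃ c ∈ S, {x : ℚ | (P c).IsRoot x}).Finite := by
    apply Set.Finite.biUnion S.finite_toSet
    intro c hc
    exact Polynomial.finite_setOf_isRoot (hPne c hc)
  obtain ⟨m, hm⟩ : ∃ m : ℕ, ((m : ℚ)) ∉ ⋃ c ∈ S, {x : ℚ | (P c).IsRoot x} := by
    by_contra h; push_neg at h
    have hsub : Set.range (fun m : ℕ => (m : ℚ)) ⊆ ⋃ c ∈ S, {x : ℚ | (P c).IsRoot x} := by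
      rintro _ ⟨m, rfl⟩; exact h m
    exact (Set.infinite_range_of_injective Nat.cast_injective) (hfin.subset hsub)
  refine ⟨fun j => (m : ℤ) ^ (j : ℕ), fun c hc hsum => ?_⟩
  apply hm
  refine Set.mem_biUnion hc ?_
  show (P c).IsRoot (m : ℚ)
  have heval : (P c).eval (m : ℚ) = ((∑ j : Fin r, (m:ℤ) ^ (j:ℕ) * c j : ℤ) : ℚ) := by
    rw [hP]
    simp only [eval_finset_sum, eval_mul, eval_C, eval_pow, eval_X]
    push_cast
    exact Finset.sum_congr rfl (fun j _ => by ring)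
  simp only [Polynomial.IsRoot, heval, hsum, Int.cast_zero]

noncomputable def auxP (ω : ℂ) (b : ℤ) : Polynomial ℂ :=
  C ω * X ^ b.toNat - X ^ (-b).toNat

noncomputable def auxQ (ω : ℂ) (b : ℤ) : Polynomial ℂ :=
  C ω * X ^ b.toNat + X ^ (-b).toNat

lemma auxP_facts {ω : ℂ} {b : ℤ} (hω : ω ≠ 0) (h : ¬(b = 0 ∧ ω = 1)) :
    (auxP ω b).natDegree = b.toNat + (-b).toNat ∧ (auxP ω b).leadingCoeff ≠ 0 := by
  rcases lt_trichotomy b 0 with hb | hb | hb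
  · have h1 : b.toNat = 0 := Int.toNat_of_nonpos hb.le
    have h2 : 0 < (-b).toNat := by omega
    have hP : auxP ω b = -(X ^ (-b).toNat - C ω) := by
      simp only [auxP, h1, pow_zero, mul_one]; ring
    constructor
    · rw [hP, natDegree_neg, natDegree_X_pow_sub_C, h1, zero_add]
    · rw [hP, leadingCoeff_neg, (monic_X_pow_sub_C ω h2.ne').leadingCoeff]
      norm_num
  · have h1 : b.toNat = 0 := by simp [hb]
    have h2 : (-b).toNat = 0 := by simp [hb]
    have hω1 : ω ≠ 1 := fun hh => h ⟨hb, hh⟩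
    have hP : auxP ω b = C (ω - 1) := by
      simp only [auxP, h1, h2, pow_zero, mul_one, map_sub, map_one]
    rw [hP, h1, h2]
    refine ⟨natDegree_C _, ?_⟩
    rw [leadingCoeff_C]
    exact sub_ne_zero.mpr hω1
  · have h2 : (-b).toNat = 0 := by omega
    have h1 : 0 < b.toNat := by omega
    have hP : auxP ω b = C ω * X ^ b.toNat - C 1 := by simp [auxP, h2]
    have hd : (auxP ω b).natDegree = b.toNat := by
      rw [hP, natDegree_sub_C, natDegree_C_mul_X_pow _ _ hω]
    constructor
    · rw [hd, h2, add_zero]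
    · rw [leadingCoeff, hd, hP, coeff_sub, coeff_C_mul, coeff_X_pow, if_pos rfl,
        coeff_C, if_neg h1.ne']
      simpa using hω

lemma auxP_ne_zero {ω : ℂ} {b : ℤ} (hω : ω ≠ 0) (h : ¬(b = 0 ∧ ω = 1)) : auxP ω b ≠ 0 :=
  fun h0 => (auxP_facts hω h).2 (by rw [h0, leadingCoeff_zero])

lemma auxQ_deg_le (ω : ℂ) (b : ℤ) : (auxQ ω b).natDegree ≤ b.toNat + (-b).toNat := by
  refine le_trans (natDegree_add_le _ _) (max_le ?_ ?_)
  · exact le_trans (natDegree_C_mul_X_pow_le _ _) (Nat.le_add_right _ _)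
  · rw [natDegree_X_pow]; exact Nat.le_add_left _ _

/-- The key nonvanishing lemma. -/
lemma key_poly_ne_zero {n : ℕ} (a : ℕ) (ha : 0 < a) (b : Fin n → ℤ)
    (ω₀ : ℂ) (hω₀ : ω₀ ≠ 0) (ω : Fin n → ℂ) (hω : ∀ i, ω i ≠ 0)
    (hbad : ∀ i j : Fin n, i ≠ j → ¬((b i = 0 ∧ ω i = 1) ∧ (b j = 0 ∧ ω j = 1))) :
    C 2 * (C (ω₀ ^ 2) * X ^ (2 * a) - 1) * ∏ i, auxP (ω i) (b i)
      - C ω₀ * X ^ a * ∑ j, auxQ (ω j) (b j) * ∏ i ∈ univ.erase j, auxP (ω i) (b i) ≠ 0 := by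
  by_cases hA : ∀ i, ¬(b i = 0 ∧ ω i = 1)
  · set D : Fin n → ℕ := fun i => (b i).toNat + (-(b i)).toNat with hD
    set N : ℕ := 2 * a + ∑ i, D i with hN
    intro h0
    have hpne : ∀ i : Fin n, auxP (ω i) (b i) ≠ 0 := fun i => auxP_ne_zero (hω i) (hA i)
    have hfacts := fun i : Fin n => auxP_facts (hω i) (hA i)
    have hF : (C (ω₀ ^ 2) * X ^ (2 * a) - 1 : Polynomial ℂ) = C (ω₀^2) * X ^ (2*a) - C 1 := by
      simp
    have hFdeg : (C (ω₀ ^ 2) * X ^ (2 * a) - 1 : Polynomial ℂ).natDegree = 2 * a := by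
      rw [hF, natDegree_sub_C, natDegree_C_mul_X_pow _ _ (pow_ne_zero 2 hω₀)]
    have hFlc : (C (ω₀ ^ 2) * X ^ (2 * a) - 1 : Polynomial ℂ).leadingCoeff = ω₀ ^ 2 := by
      rw [leadingCoeff, hFdeg, hF, coeff_sub, coeff_C_mul, coeff_X_pow, if_pos rfl,
        coeff_C, if_neg (by positivity), mul_one, sub_zero]
    have hFne : (C (ω₀ ^ 2) * X ^ (2 * a) - 1 : Polynomial ℂ) ≠ 0 := fun hh => by
      have := hFlc; rw [hh, leadingCoeff_zero] at this
      exact (pow_ne_zero 2 hω₀) this.symm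
    have hProdne : (∏ i, auxP (ω i) (b i)) ≠ 0 := prod_ne_zero_iff.mpr (fun i _ => hpne i)
    have hT1deg : (C 2 * (C (ω₀ ^ 2) * X ^ (2 * a) - 1) * ∏ i, auxP (ω i) (b i)).natDegree
        = N := by
      rw [natDegree_mul (mul_ne_zero (by norm_num) hFne) hProdne,
        natDegree_mul (by norm_num : (C 2 : Polynomial ℂ) ≠ 0) hFne,
        natDegree_C, zero_add, hFdeg, natDegree_prod _ _ (fun i _ => hpne i), hN]
      congr 1
      exact Finset.sum_congr rfl (fun i _ => ((hfacts i).1).symm ▸ rfl)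
    have hT1lc :
        (C 2 * (C (ω₀ ^ 2) * X ^ (2 * a) - 1) * ∏ i, auxP (ω i) (b i)).leadingCoeff ≠ 0 := by
      rw [leadingCoeff_mul, leadingCoeff_mul, leadingCoeff_C, hFlc, leadingCoeff_prod]
      exact mul_ne_zero (mul_ne_zero (by norm_num) (pow_ne_zero 2 hω₀))
        (prod_ne_zero_iff.mpr (fun i _ => (hfacts i).2))
    have hT2deg : (C ω₀ * X ^ a *
        ∑ j, auxQ (ω j) (b j) * ∏ i ∈ univ.erase j, auxP (ω i) (b i)).natDegree < N := by
      have hsum : (∑ j, auxQ (ω j) (b j) * ∏ i ∈ univ.erase j, auxP (ω i) (b i)).natDegree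
          ≤ ∑ i, D i := by
        refine le_trans (natDegree_sum_le _ _) ?_
        rw [Finset.fold_max_le]
        refine ⟨Nat.zero_le _, fun j _ => ?_⟩
        refine le_trans (natDegree_mul_le) ?_
        have h1 : (∏ i ∈ univ.erase j, auxP (ω i) (b i)).natDegree
            ≤ ∑ i ∈ univ.erase j, D i := by
          refine le_trans (natDegree_prod_le _ _) ?_
          exact Finset.sum_le_sum (fun i _ => (hfacts i).1.le)
        calc (auxQ (ω j) (b j)).natDegree + (∏ i ∈ univ.erase j, auxP (ω i) (b i)).natDegree
            ≤ D j + ∑ i ∈ univ.erase j, D i := Nat.add_le_add (auxQ_deg_le _ _) h1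
          _ = ∑ i, D i := Finset.add_sum_erase _ _ (mem_univ j)
      calc (C ω₀ * X ^ a *
          ∑ j, auxQ (ω j) (b j) * ∏ i ∈ univ.erase j, auxP (ω i) (b i)).natDegree
          ≤ (C ω₀ * X ^ a).natDegree
            + (∑ j, auxQ (ω j) (b j) * ∏ i ∈ univ.erase j, auxP (ω i) (b i)).natDegree :=
            natDegree_mul_le
        _ ≤ a + ∑ i, D i := Nat.add_le_add (natDegree_C_mul_X_pow_le _ _) hsum
        _ < N := by rw [hN]; omega
    have hcoeff := congrArg (fun p : Polynomial ℂ => p.coeff N) h0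
    simp only [coeff_sub, coeff_zero] at hcoeff
    rw [coeff_eq_zero_of_natDegree_lt hT2deg, sub_zero, ← hT1deg, coeff_natDegree] at hcoeff
    exact hT1lc hcoeff
  · push_neg at hA
    obtain ⟨k, hk⟩ := hA
    have hik : ∀ i : Fin n, i ≠ k → ¬(b i = 0 ∧ ω i = 1) := fun i hi hh =>
      hbad i k hi ⟨hh, hk⟩
    have hpk : auxP (ω k) (b k) = 0 := by
      simp [auxP, hk.1, hk.2]
    have hqk : auxQ (ω k) (b k) = 2 := by
      simp [auxQ, hk.1, hk.2]; ring
    have hprod0 : (∏ i, auxP (ω i) (b i)) = 0 := prod_eq_zero (mem_univ k) hpk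
    have hsum : (∑ j, auxQ (ω j) (b j) * ∏ i ∈ univ.erase j, auxP (ω i) (b i))
        = 2 * ∏ i ∈ univ.erase k, auxP (ω i) (b i) := by
      rw [← Finset.add_sum_erase _ _ (mem_univ k), hqk]
      rw [Finset.sum_eq_zero, add_zero]
      intro j hj
      have hkj : k ∈ univ.erase j := by
        simp only [mem_erase, mem_univ, and_true] at hj ⊢; exact fun h => hj h.symm
      rw [prod_eq_zero hkj hpk, mul_zero]
    rw [hprod0, mul_zero, zero_sub, hsum, neg_ne_zero]
    refine mul_ne_zero (mul_ne_zero ?_ ?_) (mul_ne_zero ?_ ?_)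
    · simpa using hω₀
    · exact pow_ne_zero _ X_ne_zero
    · norm_num
    · exact prod_ne_zero_iff.mpr (fun i hi => auxP_ne_zero (hω i) (hik i (mem_erase.mp hi).1))

lemma aux_shift_eq {s : ℂ} (hs : s ≠ 0) (b : ℤ) :
    s ^ ((-b).toNat) * s ^ b = s ^ (b.toNat) := by
  rw [← zpow_natCast s ((-b).toNat), ← zpow_natCast s (b.toNat), ← zpow_add₀ hs]
  congr 1
  omega

lemma auxP_eval {s : ℂ} (hs : s ≠ 0) (ω : ℂ) (b : ℤ) :
    (auxP ω b).eval s = s ^ ((-b).toNat) * (ω * s ^ b - 1) := by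
  simp only [auxP, eval_sub, eval_mul, eval_C, eval_pow, eval_X]
  rw [mul_sub, mul_one, ← mul_assoc, mul_comm (s ^ ((-b).toNat)) ω, mul_assoc,
    aux_shift_eq hs]

lemma auxQ_eval {s : ℂ} (hs : s ≠ 0) (ω : ℂ) (b : ℤ) :
    (auxQ ω b).eval s = s ^ ((-b).toNat) * (ω * s ^ b + 1) := by
  simp only [auxQ, eval_add, eval_mul, eval_C, eval_pow, eval_X]
  rw [mul_add, mul_one, ← mul_assoc, mul_comm (s ^ ((-b).toNat)) ω, mul_assoc,
    aux_shift_eq hs]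

lemma aux_eval_identity {n : ℕ} (a : ℤ) (ha : 0 < a) (b : Fin n → ℤ)
    (ω₀ : ℂ) (ω : Fin n → ℂ) {s : ℂ} (hs : s ≠ 0) :
    (C 2 * (C (ω₀ ^ 2) * X ^ (2 * a.toNat) - 1) * ∏ i, auxP (ω i) (b i)
      - C ω₀ * X ^ a.toNat
        * ∑ j, auxQ (ω j) (b j) * ∏ i ∈ univ.erase j, auxP (ω i) (b i)).eval s
    = s ^ (∑ i, (-(b i)).toNat) *
      (2 * ((ω₀ * s ^ a) ^ 2 - 1) * ∏ i, (ω i * s ^ (b i) - 1)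
        - (ω₀ * s ^ a)
          * ∑ j, (ω j * s ^ (b j) + 1) * ∏ i ∈ univ.erase j, (ω i * s ^ (b i) - 1)) := by
  have hsa : s ^ (a.toNat) = s ^ a := by
    rw [← zpow_natCast s a.toNat, Int.toNat_of_nonneg ha.le]
  have hX2a : s ^ (2 * a.toNat) = (s ^ a) ^ 2 := by
    rw [pow_mul', hsa]
  have hprod : (∏ i, auxP (ω i) (b i)).eval s
      = s ^ (∑ i, (-(b i)).toNat) * ∏ i, (ω i * s ^ (b i) - 1) := by
    rw [eval_prod]
    rw [Finset.prod_congr rfl (fun i _ => auxP_eval hs (ω i) (b i)), Finset.prod_mul_distrib,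
      Finset.prod_pow_eq_pow_sum]
  have hsum : (∑ j, auxQ (ω j) (b j) * ∏ i ∈ univ.erase j, auxP (ω i) (b i)).eval s
      = s ^ (∑ i, (-(b i)).toNat)
        * ∑ j, (ω j * s ^ (b j) + 1) * ∏ i ∈ univ.erase j, (ω i * s ^ (b i) - 1) := by
    rw [eval_finset_sum, Finset.mul_sum]
    refine Finset.sum_congr rfl (fun j _ => ?_)
    rw [eval_mul, auxQ_eval hs, eval_prod,
      Finset.prod_congr rfl (fun i _ => auxP_eval hs (ω i) (b i)), Finset.prod_mul_distrib,
      Finset.prod_pow_eq_pow_sum]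
    rw [show (∑ i, (-(b i)).toNat) = (-(b j)).toNat + ∑ i ∈ univ.erase j, (-(b i)).toNat from
      (Finset.add_sum_erase _ _ (mem_univ j)).symm, pow_add]
    ring
  simp only [eval_sub, eval_mul, eval_C, eval_pow, eval_X, eval_one, hprod, hsum, hX2a, hsa]
  ring

lemma aux_prod_zpow_sum {G : Type*} [CommGroup G] {ι : Type*} (s : Finset ι) (a : G)
    (f : ι → ℤ) : ∏ i ∈ s, a ^ f i = a ^ (∑ i ∈ s, f i) := by
  induction s using Finset.cons_induction with
  | empty => simp
  | cons i s hi ih => rw [Finset.prod_cons, Finset.sum_cons, ih, ← zpow_add]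

lemma aux_claim_uv {n : ℕ} {i j : Fin n} (hij : i ≠ j) (u v : ℂ)
    (h : ∀ s : ℂ, s = 1 ∨ s = 2 →
      2 * (s ^ 2 - 1) * (∏ m, (if m = i then u - 1 else if m = j then v - 1 else 2))
        - s * ∑ l, ((if l = i then u - 1 else if l = j then v - 1 else 2) + 2)
            * ∏ m ∈ univ.erase l, (if m = i then u - 1 else if m = j then v - 1 else 2) = 0) :
    u = 1 ∧ v = 1 := by
  set F : Fin n → ℂ := fun m => if m = i then u - 1 else if m = j then v - 1 else 2 with hF
  set Q : ℂ := ∏ m ∈ (univ.erase i).erase j, F m with hQ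
  have hQval : Q = 2 ^ (((univ.erase i).erase j).card) := by
    rw [hQ, ← Finset.prod_const]
    refine Finset.prod_congr rfl (fun m hm => ?_)
    simp only [mem_erase] at hm
    simp [hF, hm.1, hm.2.1]
  have hQne : Q ≠ 0 := by rw [hQval]; exact pow_ne_zero _ two_ne_zero
  have hji : j ∈ univ.erase i := by simp [hij.symm]
  have hprodF : ∏ m, F m = (u - 1) * ((v - 1) * Q) := by
    rw [← Finset.mul_prod_erase _ _ (mem_univ i), ← Finset.mul_prod_erase _ _ hji, ← hQ]
    simp [hF, hij.symm]
  have hprodFi : ∏ m ∈ univ.erase i, F m = (v - 1) * Q := by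
    rw [← Finset.mul_prod_erase _ _ hji, ← hQ]
    simp [hF, hij.symm]
  have hprodFj : ∏ m ∈ univ.erase j, F m = (u - 1) * Q := by
    have hij' : i ∈ univ.erase j := by simp [hij]
    rw [← Finset.mul_prod_erase _ _ hij', Finset.erase_right_comm, ← hQ]
    simp [hF, hij]
  have hsumF : ∑ l, (F l + 2) * ∏ m ∈ univ.erase l, F m
      = (u + 1) * ((v - 1) * Q) + (v + 1) * ((u - 1) * Q)
        + (((univ.erase i).erase j).card : ℂ) * (2 * ((u - 1) * ((v - 1) * Q))) := by
    rw [← Finset.add_sum_erase _ _ (mem_univ i), ← Finset.add_sum_erase _ _ hji]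
    have hFi : F i = u - 1 := by simp [hF]
    have hFj : F j = v - 1 := by simp [hF, hij.symm]
    have h1 : (F i + 2) * ∏ m ∈ univ.erase i, F m = (u + 1) * ((v - 1) * Q) := by
      rw [hprodFi, hFi]; ring
    have h2 : (F j + 2) * ∏ m ∈ univ.erase j, F m = (v + 1) * ((u - 1) * Q) := by
      rw [hprodFj, hFj]; ring
    have h3 : ∑ l ∈ (univ.erase i).erase j, (F l + 2) * ∏ m ∈ univ.erase l, F m
        = (((univ.erase i).erase j).card : ℂ) * (2 * ((u - 1) * ((v - 1) * Q))) := by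
      rw [Finset.sum_congr rfl (fun l hl => ?_), Finset.sum_const, nsmul_eq_mul]
      simp only [mem_erase] at hl
      have hFl : F l = 2 := by simp [hF, hl.1, hl.2.1]
      have hkey : 2 * ∏ m ∈ univ.erase l, F m = ∏ m, F m := by
        rw [← hFl, Finset.mul_prod_erase _ _ (mem_univ l)]
      calc (F l + 2) * ∏ m ∈ univ.erase l, F m = 2 * (2 * ∏ m ∈ univ.erase l, F m) := by
            rw [hFl]; ring
        _ = 2 * ((u - 1) * ((v - 1) * Q)) := by rw [hkey, hprodF]
    rw [h1, h2, h3]; ring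
  have h1 := h 1 (Or.inl rfl)
  have h2 := h 2 (Or.inr rfl)
  rw [hprodF, hsumF] at h1 h2
  set c : ℂ := (((univ.erase i).erase j).card : ℂ)
  have h6 : 6 * ((u - 1) * ((v - 1) * Q)) = 0 := by linear_combination h2 - 2 * h1
  have hAB : (u - 1) * (v - 1) = 0 := by
    rcases mul_eq_zero.mp h6 with h' | h'
    · norm_num at h'
    · rcases mul_eq_zero.mp h' with h'' | h''
      · rw [h'']; ring
      · rcases mul_eq_zero.mp h'' with h3 | h3
        · rw [h3]; ring
        · exact absurd h3 hQne
  rcases mul_eq_zero.mp hAB with hu | hv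
  · have hu1 : u = 1 := by linear_combination hu
    subst hu1
    have hv2 : 2 * ((v - 1) * Q) = 0 := by linear_combination -h1 - c * 2 * h6 / 6
    have hvq : (v - 1) * Q = 0 := by
      rcases mul_eq_zero.mp hv2 with h' | h'
      · norm_num at h'
      · exact h'
    rcases mul_eq_zero.mp hvq with h' | h'
    · exact ⟨rfl, by linear_combination h'⟩
    · exact absurd h' hQne
  · have hv1 : v = 1 := by linear_combination hv
    subst hv1
    have hu2 : 2 * ((u - 1) * Q) = 0 := by linear_combination -h1 - c * 2 * h6 / 6
    have huq : (u - 1) * Q = 0 := by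
      rcases mul_eq_zero.mp hu2 with h' | h'
      · norm_num at h'
      · exact h'
    rcases mul_eq_zero.mp huq with h' | h'
    · exact ⟨by linear_combination h', rfl⟩
    · exact absurd h' hQne

lemma aux_B_is_coset {n : ℕ} (i j : Fin n) (hij : i ≠ j) :
    IsTorsionCosetOfDim (n + 1) (n - 1)
      { x : Fin (n + 1) → ℂˣ | x i.succ = 1 ∧ x j.succ = 1 } := by
  classical
  have hsucc : i.succ ≠ j.succ := fun h => hij (Fin.succ_injective n h)
  have hcard : (((univ : Finset (Fin (n+1))).erase i.succ).erase j.succ).card = n - 1 := by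
    rw [card_erase_of_mem (by simp [hsucc.symm]), card_erase_of_mem (by simp)]
    simp [Finset.card_univ]
  let e : Fin (n - 1) ≃ {x // x ∈ ((univ : Finset (Fin (n+1))).erase i.succ).erase j.succ} :=
    (Finset.equivFinOfCardEq hcard).symm
  have hmemS : ∀ r, ((e r : Fin (n + 1)) ≠ i.succ ∧ (e r : Fin (n + 1)) ≠ j.succ) := by
    intro r
    have h2 : (e r : Fin (n+1)) ∈ ((univ : Finset (Fin (n+1))).erase i.succ).erase j.succ :=
      (e r).2
    simp only [mem_erase, mem_univ, and_true] at h2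
    exact ⟨h2.2, h2.1⟩
  have heinj : ∀ r r', (e r : Fin (n + 1)) = (e r' : Fin (n + 1)) → r = r' := by
    intro r r' h
    exact e.injective (Subtype.ext h)
  let E : Matrix (Fin (n - 1)) (Fin (n + 1)) ℤ :=
    Matrix.of (fun r c => if c = (e r : Fin (n + 1)) then 1 else 0)
  refine ⟨1, { x | ∃ t : Fin (n-1) → ℂˣ, ∀ c, x c = ∏ r, t r ^ E r c }, ⟨E, ?_, rfl⟩,
    fun _ => ⟨1, one_pos, one_pow 1⟩, ?_⟩
  · set E' := E.map (Int.cast : ℤ → ℚ) with hE'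
    have hmul : E' * E'.transpose = 1 := by
      ext r r'
      simp only [Matrix.mul_apply, Matrix.transpose_apply, hE', Matrix.map_apply, E,
        Matrix.of_apply, Matrix.one_apply]
      by_cases h : r = r'
      · subst h
        rw [Finset.sum_eq_single (e r : Fin (n + 1))]
        · simp
        · intro c _ hc; simp [hc]
        · simp
      · rw [Finset.sum_eq_zero, if_neg h]
        intro c _
        by_cases hc : c = (e r : Fin (n + 1))
        · have hc' : ¬ (c = (e r' : Fin (n + 1))) := by
            intro hc2
            exact h (heinj r r' (hc.symm.trans hc2))
          simp [hc']
        · simp [hc]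
    refine le_antisymm (Matrix.rank_le_height E') ?_
    calc (n - 1 : ℕ) = (1 : Matrix (Fin (n-1)) (Fin (n-1)) ℚ).rank := by
          rw [Matrix.rank_one, Fintype.card_fin]
      _ = (E' * E'.transpose).rank := by rw [hmul]
      _ ≤ E'.rank := Matrix.rank_mul_le_left _ _
  · ext x
    simp only [Set.mem_setOf_eq, Set.image, Set.mem_setOf_eq]
    constructor
    · rintro ⟨hxi, hxj⟩
      refine ⟨x, ⟨fun r => x (e r : Fin (n + 1)), fun c => ?_⟩, one_mul x⟩
      by_cases hc : c ∈ ((univ : Finset (Fin (n+1))).erase i.succ).erase j.succ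
      · set r0 := e.symm ⟨c, hc⟩ with hr0
        have hcr0 : c = (e r0 : Fin (n + 1)) := by rw [hr0]; simp
        rw [Finset.prod_eq_single r0]
        · simp only [E, Matrix.of_apply]
          rw [if_pos hcr0, zpow_one, ← hcr0]
        · intro r _ hr
          simp only [E, Matrix.of_apply]
          rw [if_neg, zpow_zero]
          intro h'
          exact hr (heinj r r0 (h'.symm.trans hcr0))
        · intro h; exact absurd (mem_univ r0) h
      · have hc' : c = i.succ ∨ c = j.succ := by
          simp only [mem_erase, mem_univ, and_true, not_and, not_not] at hc
          by_cases h1 : c = j.succ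
          · exact Or.inr h1
          · exact Or.inl (hc h1)
        have hEzero : ∀ r : Fin (n-1), (x (e r : Fin (n+1))) ^ (E r c) = 1 := by
          intro r
          show (x (e r : Fin (n+1))) ^ (if c = (e r : Fin (n+1)) then (1:ℤ) else 0) = 1
          rw [if_neg, zpow_zero]
          intro h'
          rcases hc' with h1 | h1
          · exact (hmemS r).1 (h'.symm.trans h1)
          · exact (hmemS r).2 (h'.symm.trans h1)
        rw [Finset.prod_congr rfl (fun r _ => hEzero r), Finset.prod_const_one]
        rcases hc' with h1 | h1
        · rw [h1, hxi]
        · rw [h1, hxj]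
    · rintro ⟨y, ⟨t, ht⟩, rfl⟩
      have hone : ∀ c, c = i.succ ∨ c = j.succ → y c = 1 := by
        intro c hc
        rw [ht c, Finset.prod_congr rfl (fun r _ => ?_), Finset.prod_const_one]
        show t r ^ (if c = (e r : Fin (n+1)) then (1:ℤ) else 0) = 1
        rw [if_neg, zpow_zero]
        intro h'
        rcases hc with h1 | h1
        · exact (hmemS r).1 (h'.symm.trans h1)
        · exact (hmemS r).2 (h'.symm.trans h1)
      constructor
      · show (1 * y) i.succ = 1
        simp [hone i.succ (Or.inl rfl)]
      · show (1 * y) j.succ = 1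
        simp [hone j.succ (Or.inr rfl)]

lemma aux_B_subset_V {n : ℕ} (i j : Fin n) (hij : i ≠ j) (x : Fin (n+1) → ℂˣ)
    (hxi : x i.succ = 1) (hxj : x j.succ = 1) :
    2 * ((x 0 : ℂ) ^ 2 - 1) * ∏ m : Fin n, ((x m.succ : ℂ) - 1)
      - (x 0 : ℂ) * ∑ l : Fin n, ((x l.succ : ℂ) + 1)
          * ∏ m ∈ Finset.univ.erase l, ((x m.succ : ℂ) - 1) = 0 := by
  have hzi : ((x i.succ : ℂ) - 1) = 0 := by rw [hxi]; simp
  have hzj : ((x j.succ : ℂ) - 1) = 0 := by rw [hxj]; simp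
  have hprod : ∏ m : Fin n, ((x m.succ : ℂ) - 1) = 0 :=
    Finset.prod_eq_zero (mem_univ i) hzi
  have hsum : ∑ l : Fin n, ((x l.succ : ℂ) + 1)
      * ∏ m ∈ Finset.univ.erase l, ((x m.succ : ℂ) - 1) = 0 := by
    refine Finset.sum_eq_zero (fun l _ => ?_)
    by_cases hl : l = i
    · subst hl
      have hjmem : j ∈ univ.erase l := by simp [Ne.symm hij]
      rw [Finset.prod_eq_zero hjmem hzj, mul_zero]
    · have himem : i ∈ univ.erase l := by
        simp only [mem_erase, mem_univ, and_true]
        exact fun h : i = l => hl h.symm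
      rw [Finset.prod_eq_zero himem hzi, mul_zero]
  rw [hprod, hsum]
  ring

lemma aux_H_mul {n r : ℕ} (E : Matrix (Fin r) (Fin n) ℤ) {x y : Fin n → ℂˣ}
    (hx : ∃ t : Fin r → ℂˣ, ∀ c, x c = ∏ j, t j ^ E j c)
    (hy : ∃ t : Fin r → ℂˣ, ∀ c, y c = ∏ j, t j ^ E j c) :
    ∃ t : Fin r → ℂˣ, ∀ c, (x * y) c = ∏ j, t j ^ E j c := by
  obtain ⟨t, ht⟩ := hx
  obtain ⟨t', ht'⟩ := hy
  refine ⟨t * t', fun c => ?_⟩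
  rw [Pi.mul_apply, ht c, ht' c, ← Finset.prod_mul_distrib]
  exact Finset.prod_congr rfl (fun j _ => by rw [Pi.mul_apply, mul_zpow])

lemma aux_H_inv {n r : ℕ} (E : Matrix (Fin r) (Fin n) ℤ) {x : Fin n → ℂˣ}
    (hx : ∃ t : Fin r → ℂˣ, ∀ c, x c = ∏ j, t j ^ E j c) :
    ∃ t : Fin r → ℂˣ, ∀ c, x⁻¹ c = ∏ j, t j ^ E j c := by
  obtain ⟨t, ht⟩ := hx
  refine ⟨t⁻¹, fun c => ?_⟩
  rw [Pi.inv_apply, ht c, ← Finset.prod_inv_distrib]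
  exact Finset.prod_congr rfl (fun j _ => by rw [Pi.inv_apply, inv_zpow])

end Aux

open Polynomial Finset in
/-- For the hypersurface
`h = 2(x₀² - 1) ∏_{i=1}^n (x_i - 1) - x₀ Σ_{j=1}^n (x_j + 1) ∏_{i ≠ j} (x_i - 1) = 0`
in `G_m^(n+1)`, the only maximal torsion cosets on which the coordinate `x₀` is nonconstant
are the algebraic subgroups `B i j = {x : x_i = x_j = 1}` for distinct `i j ∈ {1, …, n}`,
each of dimension `n - 1`. -/
theorem maximal_torsion_cosets_of_hypersurface (n : ℕ) (V : Set (Fin (n + 1) → ℂˣ))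
    (hV : V = { x | 2 * ((x 0 : ℂ) ^ 2 - 1) * ∏ i : Fin n, ((x i.succ : ℂ) - 1)
        - (x 0 : ℂ) * ∑ j : Fin n, ((x j.succ : ℂ) + 1)
            * ∏ i ∈ Finset.univ.erase j, ((x i.succ : ℂ) - 1) = 0 }) :
    (∀ C : Set (Fin (n + 1) → ℂˣ),
      (IsMaximalTorsionCosetOf (n + 1) C V ∧ ¬ ∃ c : ℂˣ, ∀ x ∈ C, x 0 = c) ↔
        ∃ i j : Fin n, i ≠ j ∧ C = { x | x i.succ = 1 ∧ x j.succ = 1 }) ∧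
    (∀ i j : Fin n, i ≠ j →
      IsTorsionCosetOfDim (n + 1) (n - 1) { x | x i.succ = 1 ∧ x j.succ = 1 }) := by
  classical
  refine ⟨?_, fun i j hij => aux_B_is_coset i j hij⟩
  intro C
  constructor
  · rintro ⟨⟨⟨r, ω, H, ⟨E, hrank, hHdef⟩, hωtor, hC⟩, hCV, hmaxi⟩, hnc⟩
    have hmemC : ∀ x ∈ C, ∃ t : Fin r → ℂˣ, ∀ c, x c = ω c * ∏ j, t j ^ E j c := by
      intro x hx
      rw [hC] at hx
      obtain ⟨y, hy, rfl⟩ := hx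
      rw [hHdef] at hy
      obtain ⟨t, ht⟩ := hy
      refine ⟨t, fun c => ?_⟩
      show (ω * y) c = _
      rw [Pi.mul_apply, ht c]
    have hmemC' : ∀ t : Fin r → ℂˣ, (fun c => ω c * ∏ j, t j ^ E j c) ∈ C := by
      intro t
      rw [hC]
      refine ⟨fun c => ∏ j, t j ^ E j c, ?_, rfl⟩
      rw [hHdef]; exact ⟨t, fun c => rfl⟩
    have hcol0 : (fun j => E j 0) ≠ (0 : Fin r → ℤ) := by
      intro h0
      apply hnc
      refine ⟨ω 0, fun x hx => ?_⟩
      obtain ⟨t, ht⟩ := hmemC x hx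
      rw [ht 0]
      have hz : ∀ j : Fin r, t j ^ E j 0 = 1 := by
        intro j
        have := congrFun h0 j
        simp only [Pi.zero_apply] at this
        rw [this, zpow_zero]
      rw [Finset.prod_congr rfl (fun j _ => hz j), Finset.prod_const_one, mul_one]
    by_cases hA2 : ∃ p q : Fin n, p ≠ q ∧ ((fun j => E j p.succ) = (0 : Fin r → ℤ)
        ∧ ω p.succ = 1) ∧ ((fun j => E j q.succ) = (0 : Fin r → ℤ) ∧ ω q.succ = 1)
    · obtain ⟨p, q, hpq, ⟨hp1, hp2⟩, hq1, hq2⟩ := hA2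
      have hone : ∀ m : Fin n, (fun j => E j m.succ) = (0 : Fin r → ℤ) → ω m.succ = 1 →
          ∀ x ∈ C, x m.succ = 1 := by
        intro m hm1 hm2 x hx
        obtain ⟨t, ht⟩ := hmemC x hx
        rw [ht m.succ, hm2, one_mul]
        have hz : ∀ j : Fin r, t j ^ E j m.succ = 1 := by
          intro j
          have := congrFun hm1 j
          simp only [Pi.zero_apply] at this
          rw [this, zpow_zero]
        rw [Finset.prod_congr rfl (fun j _ => hz j), Finset.prod_const_one]
      have hCB : C ⊆ { x | x p.succ = 1 ∧ x q.succ = 1 } := fun x hx =>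
        ⟨hone p hp1 hp2 x hx, hone q hq1 hq2 x hx⟩
      have hBV : { x : Fin (n+1) → ℂˣ | x p.succ = 1 ∧ x q.succ = 1 } ⊆ V := by
        intro x hx
        rw [hV]
        exact aux_B_subset_V p q hpq x hx.1 hx.2
      exact ⟨p, q, hpq, hmaxi _ ⟨n - 1, aux_B_is_coset p q hpq⟩ hBV hCB⟩
    · exfalso
      set colF : Fin (n+1) → (Fin r → ℤ) := fun c => (fun j => E j c) with hcolF
      set S : Finset (Fin r → ℤ) := (Finset.univ.image colF).erase 0 with hSdef
      have hS : ∀ c ∈ S, c ≠ 0 := fun c hc => (Finset.mem_erase.mp hc).1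
      obtain ⟨v, hv⟩ := aux_exists_int_vec S hS
      have hdot : ∀ c : Fin (n+1), colF c ≠ 0 → ∑ j, v j * E j c ≠ 0 := by
        intro c hc
        exact hv (colF c)
          (Finset.mem_erase.mpr ⟨hc, Finset.mem_image_of_mem colF (mem_univ c)⟩)
      obtain ⟨w, hw0, hwnz⟩ : ∃ w : Fin r → ℤ, 0 < ∑ j, w j * E j 0 ∧
          ∀ c, colF c ≠ 0 → ∑ j, w j * E j c ≠ 0 := by
        rcases (hdot 0 hcol0).lt_or_gt with h | h
        · refine ⟨-v, ?_, ?_⟩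
          · have hneg : ∑ j, (-v) j * E j 0 = -∑ j, v j * E j 0 := by
              rw [← Finset.sum_neg_distrib]
              exact Finset.sum_congr rfl (fun j _ => by simp)
            rw [hneg]; omega
          · intro c hc
            have h2 := hdot c hc
            have hneg : ∑ j, (-v) j * E j c = -∑ j, v j * E j c := by
              rw [← Finset.sum_neg_distrib]
              exact Finset.sum_congr rfl (fun j _ => by simp)
            rw [hneg]; omega
        · exact ⟨v, h, hdot⟩
      set dd : Fin (n+1) → ℤ := fun c => ∑ j, w j * E j c with hdd
      set φ : ℂˣ → (Fin (n+1) → ℂˣ) := fun s => fun c => ω c * s ^ dd c with hφ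
      have hφC : ∀ s : ℂˣ, φ s ∈ C := by
        intro s
        have hφeq : φ s = fun c => ω c * ∏ j, (fun j => s ^ w j) j ^ E j c := by
          funext c
          show ω c * s ^ dd c = ω c * ∏ j, (s ^ w j) ^ E j c
          congr 1
          rw [Finset.prod_congr rfl (fun j _ => (zpow_mul s (w j) (E j c)).symm),
            aux_prod_zpow_sum]
        rw [hφeq]
        exact hmemC' _
      set Ω : Fin n → ℂ := fun m => ((ω m.succ : ℂˣ) : ℂ) with hΩ
      set bZ : Fin n → ℤ := fun m => dd m.succ with hbZ
      have heq : ∀ s : ℂˣ,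
          2 * (((ω 0 : ℂ) * (s:ℂ) ^ dd 0) ^ 2 - 1)
              * ∏ m : Fin n, (Ω m * (s:ℂ) ^ bZ m - 1)
            - ((ω 0 : ℂ) * (s:ℂ) ^ dd 0)
              * ∑ l : Fin n, (Ω l * (s:ℂ) ^ bZ l + 1)
                  * ∏ m ∈ univ.erase l, (Ω m * (s:ℂ) ^ bZ m - 1) = 0 := by
        intro s
        have hmem := hCV (hφC s)
        rw [hV] at hmem
        simp only [Set.mem_setOf_eq, hφ, Units.val_mul, Units.val_zpow_eq_zpow_val] at hmem
        exact hmem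
      have haZpos : 0 < dd 0 := hw0
      have hbadfun : ∀ p q : Fin n, p ≠ q →
          ¬((bZ p = 0 ∧ Ω p = 1) ∧ (bZ q = 0 ∧ Ω q = 1)) := by
        intro p q hpqne hcon
        apply hA2
        have hcolzero : ∀ m : Fin n, bZ m = 0 → (fun j => E j m.succ) = (0 : Fin r → ℤ) := by
          intro m hm
          by_contra hne
          exact hwnz m.succ hne hm
        exact ⟨p, q, hpqne, ⟨hcolzero p hcon.1.1, Units.val_eq_one.mp hcon.1.2⟩,
          hcolzero q hcon.2.1, Units.val_eq_one.mp hcon.2.2⟩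
      have hGne := key_poly_ne_zero (dd 0).toNat (by omega) bZ ((ω 0 : ℂ))
        (Units.ne_zero _) Ω (fun m => Units.ne_zero _) hbadfun
      apply hGne
      have hroot : ∀ s : ℂ, s ≠ 0 →
          Polynomial.eval s (Polynomial.C 2
              * (Polynomial.C ((ω 0 : ℂ) ^ 2) * X ^ (2 * (dd 0).toNat) - 1)
              * ∏ i, auxP (Ω i) (bZ i)
            - Polynomial.C ((ω 0 : ℂ)) * X ^ (dd 0).toNat
              * ∑ j, auxQ (Ω j) (bZ j) * ∏ i ∈ univ.erase j, auxP (Ω i) (bZ i)) = 0 := by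
        intro s hsne
        rw [aux_eval_identity (dd 0) haZpos bZ ((ω 0 : ℂ)) Ω hsne]
        have hs' := heq (Units.mk0 s hsne)
        simp only [Units.val_mk0] at hs'
        rw [hs', mul_zero]
      refine Polynomial.eq_zero_of_infinite_isRoot _ ?_
      exact ((Set.finite_singleton (0:ℂ)).infinite_compl).mono
        (fun s hs => hroot s (by simpa using hs))
  · rintro ⟨p, q, hpq, rfl⟩
    have hBV : { x : Fin (n+1) → ℂˣ | x p.succ = 1 ∧ x q.succ = 1 } ⊆ V := by
      intro x hx
      rw [hV]
      exact aux_B_subset_V p q hpq x hx.1 hx.2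
    refine ⟨⟨⟨n - 1, aux_B_is_coset p q hpq⟩, hBV, ?_⟩, ?_⟩
    · -- maximality
      intro C' hC' hC'V hBC'
      obtain ⟨r, ω, H, ⟨E, hrank, hHdef⟩, hωtor, hC'eq⟩ := hC'
      have h1B : (1 : Fin (n+1) → ℂˣ) ∈
          { x : Fin (n+1) → ℂˣ | x p.succ = 1 ∧ x q.succ = 1 } := ⟨rfl, rfl⟩
      have h1C' : (1 : Fin (n+1) → ℂˣ) ∈ C' := hBC' h1B
      have hωinH : ω ∈ H := by
        rw [hC'eq] at h1C'
        obtain ⟨y, hy, hy1⟩ := h1C'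
        have hωy : ω = y⁻¹ := eq_inv_of_mul_eq_one_left hy1
        rw [hHdef] at hy ⊢
        rw [hωy]
        exact aux_H_inv E hy
      have hC'H : C' = H := by
        rw [hC'eq]
        ext x
        constructor
        · rintro ⟨y, hy, rfl⟩
          show ω * y ∈ H
          rw [hHdef] at hωinH hy ⊢
          exact aux_H_mul E hωinH hy
        · intro hx
          refine ⟨ω⁻¹ * x, ?_, by show ω * (ω⁻¹ * x) = x; group⟩
          rw [hHdef] at hωinH hx ⊢
          have hωinv := aux_H_inv E hωinH
          exact aux_H_mul E hωinv hx
      have hC'B : C' ⊆ { x : Fin (n+1) → ℂˣ | x p.succ = 1 ∧ x q.succ = 1 } := by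
        intro x hx
        set u : ℂ := ((x p.succ : ℂˣ) : ℂ) with hu
        set v : ℂ := ((x q.succ : ℂˣ) : ℂ) with hvv
        have hkey : ∀ s : ℂ, s = 1 ∨ s = 2 →
            2 * (s ^ 2 - 1) * (∏ m, (if m = p then u - 1 else if m = q then v - 1 else 2))
              - s * ∑ l, ((if l = p then u - 1 else if l = q then v - 1 else 2) + 2)
                  * ∏ m ∈ univ.erase l,
                      (if m = p then u - 1 else if m = q then v - 1 else 2) = 0 := by
          intro s hs
          have hsne : s ≠ 0 := by rcases hs with h | h <;> rw [h] <;> norm_num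
          set z : Fin (n+1) → ℂˣ := fun c =>
            if c = 0 then Units.mk0 s hsne
            else if c = p.succ then x p.succ
            else if c = q.succ then x q.succ
            else Units.mk0 3 (by norm_num) with hz
          have hyB : x⁻¹ * z ∈ { x : Fin (n+1) → ℂˣ | x p.succ = 1 ∧ x q.succ = 1 } := by
            constructor
            · show (x p.succ)⁻¹ * z p.succ = 1
              have : z p.succ = x p.succ := by
                simp [hz, Fin.succ_ne_zero]
              rw [this, inv_mul_cancel]
            · show (x q.succ)⁻¹ * z q.succ = 1
              have hqp : q.succ ≠ p.succ := fun h => hpq (Fin.succ_injective n h).symm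
              have : z q.succ = x q.succ := by
                simp [hz, Fin.succ_ne_zero, hqp]
              rw [this, inv_mul_cancel]
          have hzC' : z ∈ C' := by
            have hzx : z = x * (x⁻¹ * z) := by group
            rw [hzx, hC'H]
            rw [hC'H] at hx
            have hyH := hBC' hyB
            rw [hC'H] at hyH
            rw [hHdef] at hx hyH ⊢
            exact aux_H_mul E hx hyH
          have hzV := hC'V hzC'
          rw [hV] at hzV
          have hz0 : ((z 0 : ℂˣ) : ℂ) = s := by simp only [hz]; simp
          have hzm : ∀ m : Fin n, ((z m.succ : ℂˣ) : ℂ) - 1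
              = (if m = p then u - 1 else if m = q then v - 1 else 2) := by
            intro m
            simp only [hz, if_neg (Fin.succ_ne_zero m)]
            by_cases h1 : m = p
            · subst h1
              rw [if_pos rfl, if_pos rfl]
            · rw [if_neg (fun h => h1 (Fin.succ_injective n h)), if_neg h1]
              by_cases h2 : m = q
              · subst h2
                rw [if_pos rfl, if_pos rfl]
              · rw [if_neg (fun h => h2 (Fin.succ_injective n h)), if_neg h2, Units.val_mk0]
                norm_num
          have hzm' : ∀ m : Fin n, ((z m.succ : ℂˣ) : ℂ) + 1
              = (if m = p then u - 1 else if m = q then v - 1 else 2) + 2 := by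
            intro m
            have := hzm m
            linear_combination this
          have hprodeq : ∏ m : Fin n, (((z m.succ : ℂˣ) : ℂ) - 1)
              = ∏ m, (if m = p then u - 1 else if m = q then v - 1 else 2) :=
            Finset.prod_congr rfl (fun m _ => hzm m)
          have hsumeq : ∑ l : Fin n, (((z l.succ : ℂˣ) : ℂ) + 1)
                * ∏ m ∈ univ.erase l, (((z m.succ : ℂˣ) : ℂ) - 1)
              = ∑ l, ((if l = p then u - 1 else if l = q then v - 1 else 2) + 2)
                * ∏ m ∈ univ.erase l,
                    (if m = p then u - 1 else if m = q then v - 1 else 2) := by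
            refine Finset.sum_congr rfl (fun l _ => ?_)
            rw [hzm' l]
            congr 1
            exact Finset.prod_congr rfl (fun m _ => hzm m)
          rw [Set.mem_setOf_eq, hz0, hprodeq, hsumeq] at hzV
          exact hzV
        have huv := aux_claim_uv hpq u v hkey
        exact ⟨Units.val_eq_one.mp huv.1, Units.val_eq_one.mp huv.2⟩
      exact Set.Subset.antisymm hBC' hC'B
    · -- x₀ nonconstant
      rintro ⟨c, hc⟩
      have h1B : (1 : Fin (n+1) → ℂˣ) ∈
          { x : Fin (n+1) → ℂˣ | x p.succ = 1 ∧ x q.succ = 1 } := ⟨rfl, rfl⟩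
      set x2 : Fin (n+1) → ℂˣ := fun c' =>
        if c' = 0 then Units.mk0 2 two_ne_zero else 1 with hx2
      have h2B : x2 ∈ { x : Fin (n+1) → ℂˣ | x p.succ = 1 ∧ x q.succ = 1 } := by
        constructor
        · show (if p.succ = 0 then Units.mk0 2 two_ne_zero else 1) = 1
          rw [if_neg (Fin.succ_ne_zero p)]
        · show (if q.succ = 0 then Units.mk0 2 two_ne_zero else 1) = 1
          rw [if_neg (Fin.succ_ne_zero q)]
      have e1 : (1 : ℂˣ) = c := hc 1 h1B
      have e2 : Units.mk0 2 two_ne_zero = c := by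
        have := hc x2 h2B
        rw [hx2] at this
        simpa using this
      have : (1 : ℂˣ) = Units.mk0 2 two_ne_zero := e1.trans e2.symm
      have hval := congrArg Units.val this
      simp only [Units.val_one, Units.val_mk0] at hval
      norm_num at hval
end

section
/- For every integer n > 0, the polynomial z⁴ − n·z³ − (2n+1)·z² − n·z + 1 is the minimal polynomial over ℚ of a Salem number of trace n. -/
open Polynomial

set_option maxHeartbeats 2000000 in
/-- For every integer `n > 0`, the polynomial `z⁴ - n z³ - (2n+1) z² - n z + 1` is the
minimal polynomial of a Salem number of trace `n`. -/
theorem salem_number_of_positive_trace (n : ℤ) (hn : 0 < n) :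
    ∃ τ : ℝ, IsSalem τ ∧
      minpoly ℚ τ =
        X ^ 4 - C (n : ℚ) * X ^ 3 - C (2 * (n : ℚ) + 1) * X ^ 2 - C (n : ℚ) * X + 1 ∧
      traceQ τ = (n : ℚ) := by
  have hn1 : (1:ℝ) ≤ (n:ℝ) := by exact_mod_cast hn
  set nr : ℝ := (n : ℝ) with hnr
  set s : ℝ := Real.sqrt (nr^2 + 8*nr + 12) with hsdef
  have hs0 : 0 ≤ s := Real.sqrt_nonneg _
  have hs2 : s^2 = nr^2 + 8*nr + 12 := Real.sq_sqrt (by nlinarith)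
  have hslb : nr + 3 < s := by nlinarith
  have hsub : s < nr + 4 := by nlinarith
  set y1 : ℝ := (nr + s)/2 with hy1def
  set y2 : ℝ := (nr - s)/2 with hy2def
  have hy1 : 2 < y1 := by rw [hy1def]; nlinarith
  have hy2a : -2 < y2 := by rw [hy2def]; nlinarith
  have hy2b : y2 < 0 := by rw [hy2def]; nlinarith
  set t : ℝ := Real.sqrt (y1^2 - 4) with htdef
  have ht0 : 0 ≤ t := Real.sqrt_nonneg _
  have ht2 : t^2 = y1^2 - 4 := Real.sq_sqrt (by nlinarith)
  set τ : ℝ := (y1 + t)/2 with hτdef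
  have hτ1 : 1 < τ := by rw [hτdef]; nlinarith
  have hτ0 : τ ≠ 0 := by positivity
  have hτq : τ^2 - y1*τ + 1 = 0 := by rw [hτdef]; linear_combination (1/4) * ht2
  have hsum' : τ + τ⁻¹ = y1 := by
    field_simp
    linear_combination hτq
  have hττ : τ * τ⁻¹ = 1 := mul_inv_cancel₀ hτ0
  have hy12s : y1 + y2 = nr := by rw [hy1def, hy2def]; ring
  have hy12p : y1 * y2 = -(2*nr+3) := by
    rw [hy1def, hy2def]; linear_combination (-(1:ℝ)/4) * hs2
  -- real factorization
  have hfacR : ∀ x : ℝ, x^4 - nr*x^3 - (2*nr+1)*x^2 - nr*x + 1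
      = (x^2 - y1*x + 1)*(x^2 - y2*x + 1) := by
    intro x
    linear_combination (-(x^3) - x) * hy12s + (-(x^2)) * hy12p
  have hpos : ∀ x : ℝ, 0 < x^2 - y2*x + 1 := by
    intro x; nlinarith [sq_nonneg (x - y2/2), sq_nonneg y2]
  have hreal : ∀ x : ℝ, x^4 - nr*x^3 - (2*nr+1)*x^2 - nr*x + 1 = 0 → x = τ ∨ x = τ⁻¹ := by
    intro x hx
    rw [hfacR x] at hx
    rcases mul_eq_zero.1 hx with h1 | h2
    · have : (x - τ)*(x - τ⁻¹) = 0 := by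
        linear_combination h1 - x*hsum' + hττ
      rcases mul_eq_zero.1 this with h | h
      · exact Or.inl (by linarith [sub_eq_zero.1 h])
      · exact Or.inr (by linarith [sub_eq_zero.1 h])
    · exact absurd h2 (hpos x).ne'
  -- irrationality
  have hirr : Irrational s := by
    have hcast : s = Real.sqrt ((n^2 + 8*n + 12 : ℤ) : ℝ) := by
      rw [hsdef, hnr]; congr 1; push_cast; ring
    rw [hcast]
    refine (irrational_sqrt_intCast_iff_of_nonneg (by nlinarith)).2 ?_
    rintro ⟨r, hr⟩
    have h1 : (n+3) < |r| := by nlinarith [abs_nonneg r, abs_mul_abs_self r]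
    have h2 : n + 4 ≤ |r| := by omega
    nlinarith [abs_mul_abs_self r]
  have hy1irr : Irrational y1 := by
    rw [hy1def, hnr]
    have h := (hirr.intCast_add n).div_intCast (by norm_num : (2:ℤ) ≠ 0)
    have e : ((n:ℝ) + s)/2 = (((n:ℤ):ℝ) + s) / ((2:ℤ):ℝ) := by push_cast; ring
    rw [e]; exact h
  have hτirr : Irrational τ := by
    rintro ⟨q, hq⟩
    refine hy1irr ⟨q + q⁻¹, ?_⟩
    rw [← hsum', ← hq]
    push_cast
    rfl
  -- polynomial
  set P : ℚ[X] := X ^ 4 - C (n : ℚ) * X ^ 3 - C (2 * (n : ℚ) + 1) * X ^ 2 - C (n : ℚ) * X + 1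
    with hP
  have hPmonic : P.Monic := by rw [hP]; monicity!
  have hPdeg : P.natDegree = 4 := by rw [hP]; compute_degree!
  have hPne : P ≠ 0 := hPmonic.ne_zero
  have haevalR : ∀ x : ℝ, aeval x P = x^4 - nr*x^3 - (2*nr+1)*x^2 - nr*x + 1 := by
    intro x; rw [hP]; simp only [map_add, map_sub, map_mul, map_pow, map_one, aeval_X, aeval_C, map_intCast, map_ofNat, hnr]; try push_cast; try ring
  have haevalC : ∀ z : ℂ, aeval z P = z^4 - (nr:ℂ)*z^3 - (2*(nr:ℂ)+1)*z^2 - (nr:ℂ)*z + 1 := by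
    intro z; rw [hP]; simp only [map_add, map_sub, map_mul, map_pow, map_one, aeval_X, aeval_C, map_intCast, map_ofNat, hnr]; try push_cast; try ring
  have hτP : aeval τ P = 0 := by
    rw [haevalR, hfacR]
    rw [show τ^2 - y1*τ + 1 = 0 from hτq]
    ring
  -- integrality
  have hint : IsIntegral ℤ τ := by
    refine ⟨X ^ 4 - C n * X ^ 3 - C (2*n+1) * X ^ 2 - C n * X + 1, by monicity!, ?_⟩
    have h0 : (τ:ℝ)^4 - nr*τ^3 - (2*nr+1)*τ^2 - nr*τ + 1 = 0 := by
      rw [← haevalR]; exact hτP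
    rw [hnr] at h0
    rw [← aeval_def]
    simp only [map_add, map_sub, map_mul, map_pow, map_one, aeval_X, aeval_C, map_intCast,
      map_ofNat, eq_intCast]
    push_cast
    linear_combination h0
  have hintQ : IsIntegral ℚ τ := ⟨P, hPmonic, hτP⟩
  have hmm : (minpoly ℚ τ).Monic := minpoly.monic hintQ
  obtain ⟨q, hq⟩ := minpoly.dvd ℚ τ hτP
  have hmne : minpoly ℚ τ ≠ 0 := hmm.ne_zero
  have hqmonic : q.Monic := hmm.of_mul_monic_left (hq ▸ hPmonic)
  have hdegsum : (minpoly ℚ τ).natDegree + q.natDegree = 4 := by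
    rw [← hPdeg, hq, natDegree_mul hmne hqmonic.ne_zero]
  have hdegpos : 0 < (minpoly ℚ τ).natDegree := minpoly.natDegree_pos hintQ
  -- rule out degrees 1, 2, 3
  have hmdeg : (minpoly ℚ τ).natDegree = 4 := by
    by_contra hne
    have hcase : (minpoly ℚ τ).natDegree = 1 ∨ (minpoly ℚ τ).natDegree = 2 ∨
        (minpoly ℚ τ).natDegree = 3 := by omega
    have haevalm : aeval τ (minpoly ℚ τ) = 0 := minpoly.aeval ℚ τ
    rcases hcase with h1 | h2 | h3
    · -- degree 1 : τ rational
      have hc1 : (minpoly ℚ τ).coeff 1 = 1 := by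
        have := hmm.coeff_natDegree; rwa [h1] at this
      have hm1 : minpoly ℚ τ = C ((minpoly ℚ τ).coeff 1) * X + C ((minpoly ℚ τ).coeff 0) :=
        eq_X_add_C_of_natDegree_le_one (p := minpoly ℚ τ) (by omega)
      rw [hm1] at haevalm
      rw [hc1] at haevalm
      simp at haevalm
      exact hτirr ⟨-((minpoly ℚ τ).coeff 0), by push_cast; linarith⟩
    · -- degree 2
      set b : ℚ := (minpoly ℚ τ).coeff 1 with hb
      set c : ℚ := (minpoly ℚ τ).coeff 0 with hc
      have hc2 : (minpoly ℚ τ).coeff 2 = 1 := by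
        have := hmm.coeff_natDegree; rwa [h2] at this
      have hkey : ∀ x : ℝ, aeval x (minpoly ℚ τ) = x^2 + (b:ℝ)*x + (c:ℝ) := by
        intro x
        rw [aeval_eq_sum_range, h2, Finset.sum_range_succ, Finset.sum_range_succ,
          Finset.sum_range_one, hc2]
        simp [Rat.smul_def, ← hb, ← hc]
        ring
      have hev : τ^2 + (b:ℝ)*τ + (c:ℝ) = 0 := by rw [← hkey]; exact haevalm
      set z₀ : ℝ := -(b:ℝ) - τ with hz₀
      have hz₀m : aeval z₀ (minpoly ℚ τ) = 0 := by
        rw [hkey, hz₀]; linear_combination hev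
      have hz₀P : aeval z₀ P = 0 := by
        rw [hq, map_mul, hz₀m, zero_mul]
      rw [haevalR] at hz₀P
      rcases hreal z₀ hz₀P with h | h
      · exact hτirr ⟨-b/2, by push_cast; rw [hz₀] at h; linarith⟩
      · refine hy1irr ⟨-b, ?_⟩
        rw [← hsum']
        rw [hz₀] at h
        push_cast
        linarith [h]
    · -- degree 3 : q has degree 1
      have hq1 : q.natDegree = 1 := by omega
      have hqc1 : q.coeff 1 = 1 := by
        have := hqmonic.coeff_natDegree; rwa [hq1] at this
      have hqform : q = C (q.coeff 1) * X + C (q.coeff 0) :=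
        eq_X_add_C_of_natDegree_le_one (p := q) (by omega)
      rw [hqc1, map_one, one_mul] at hqform
      set r : ℚ := -(q.coeff 0) with hr
      have hrP : aeval ((r:ℝ)) P = 0 := by
        rw [hq, map_mul, hqform]
        simp [hr]
      rw [haevalR] at hrP
      rcases hreal _ hrP with h | h
      · exact hτirr ⟨r, h⟩
      · have hrne : (r:ℝ) ≠ 0 := by
          rw [h]; positivity
        refine hτirr ⟨r⁻¹, ?_⟩
        push_cast
        rw [← inv_inv τ, ← h]
  have hmP : minpoly ℚ τ = P := by
    have hq0 : q.natDegree = 0 := by omega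
    rw [hqmonic.natDegree_eq_zero.1 hq0, mul_one] at hq
    exact hq.symm
  -- roots of P over ℂ
  have hPCne : P.map (algebraMap ℚ ℂ) ≠ 0 := (Polynomial.map_ne_zero_iff
    (algebraMap ℚ ℂ).injective).2 hPne
  have hmemroots : ∀ z : ℂ, z ∈ conjugatesC τ ↔
      z^4 - (nr:ℂ)*z^3 - (2*(nr:ℂ)+1)*z^2 - (nr:ℂ)*z + 1 = 0 := by
    intro z
    rw [conjugatesC, hmP, mem_roots']
    constructor
    · rintro ⟨-, h⟩
      rw [IsRoot, eval_map, ← aeval_def, haevalC] at h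
      exact h
    · intro h
      refine ⟨hPCne, ?_⟩
      rw [IsRoot, eval_map, ← aeval_def, haevalC]
      exact h
  -- complex factorization
  have hy12sC : (y1:ℂ) + (y2:ℂ) = (nr:ℂ) := by exact_mod_cast hy12s
  have hy12pC : (y1:ℂ) * (y2:ℂ) = -(2*(nr:ℂ)+3) := by exact_mod_cast hy12p
  have hfacC : ∀ z : ℂ, z^4 - (nr:ℂ)*z^3 - (2*(nr:ℂ)+1)*z^2 - (nr:ℂ)*z + 1
      = (z^2 - (y1:ℂ)*z + 1)*(z^2 - (y2:ℂ)*z + 1) := by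
    intro z
    linear_combination (z^3 + z) * hy12sC + (-(z^2)) * hy12pC
  refine ⟨τ, ⟨hint, hτ1, ?_, ?_⟩, hmP, ?_⟩
  · -- all other conjugates in unit disc
    intro z hz hzτ
    rw [hmemroots] at hz
    rw [hfacC] at hz
    rcases mul_eq_zero.1 hz with h1 | h2
    · -- z = τ or τ⁻¹
      have hsumC : (τ:ℂ) + (τ⁻¹:ℝ) = (y1:ℂ) := by exact_mod_cast hsum'
      have hττC : (τ:ℂ) * (τ⁻¹:ℝ) = 1 := by exact_mod_cast hττ
      have : (z - (τ:ℂ))*(z - ((τ⁻¹:ℝ):ℂ)) = 0 := by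
        linear_combination h1 - z*hsumC + hττC
      rcases mul_eq_zero.1 this with h | h
      · exact absurd (sub_eq_zero.1 h) hzτ
      · rw [sub_eq_zero.1 h]
        rw [Complex.norm_real, Real.norm_eq_abs, abs_of_pos (by positivity)]
        rw [inv_le_one_iff₀]
        right; linarith
    · -- on unit circle
      have hconj : (starRingEnd ℂ z)^2 - (y2:ℂ) * (starRingEnd ℂ z) + 1 = 0 := by
        have := congrArg (starRingEnd ℂ) h2
        simpa [map_pow, Complex.conj_ofReal] using this
      by_cases hzc : starRingEnd ℂ z = z
      · -- z real: contradiction with positivity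
        obtain ⟨x, hx⟩ : ∃ x : ℝ, z = (x:ℂ) := ⟨z.re, ((Complex.conj_eq_iff_re.1 hzc).symm)⟩
        rw [hx] at h2
        have : (((x^2 - y2*x + 1 : ℝ)):ℂ) = 0 := by push_cast; linear_combination h2
        have hx0 : x^2 - y2*x + 1 = 0 := by exact_mod_cast this
        exact absurd hx0 (hpos x).ne'
      · have hsub : (z - starRingEnd ℂ z) * (z + starRingEnd ℂ z - (y2:ℂ)) = 0 := by
          linear_combination h2 - hconj
        have hzsum : z + starRingEnd ℂ z = (y2:ℂ) := by
          rcases mul_eq_zero.1 hsub with h | h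
          · exact absurd (sub_eq_zero.1 h).symm hzc
          · linear_combination h
        have hnorm : z * starRingEnd ℂ z = 1 := by
          linear_combination z * hzsum - h2
        have : ((Complex.normSq z : ℝ) : ℂ) = 1 := by
          rw [← Complex.mul_conj]; exact hnorm
        have hns : Complex.normSq z = 1 := by exact_mod_cast this
        have : ‖z‖ ^ 2 = 1 := by rw [Complex.sq_norm, hns]
        nlinarith [norm_nonneg z]
  · -- existence of conjugate on unit circle
    set w : ℝ := Real.sqrt (4 - y2^2) with hw
    have hw2 : w^2 = 4 - y2^2 := Real.sq_sqrt (by nlinarith)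
    refine ⟨((y2/2 : ℝ):ℂ) + ((w/2 : ℝ):ℂ) * Complex.I, ?_, ?_⟩
    · rw [hmemroots, hfacC]
      have hw2C : ((w:ℝ):ℂ)^2 = 4 - ((y2:ℝ):ℂ)^2 := by exact_mod_cast hw2
      have hroot : (((y2/2 : ℝ):ℂ) + ((w/2 : ℝ):ℂ) * Complex.I)^2
          - (y2:ℂ) * (((y2/2 : ℝ):ℂ) + ((w/2 : ℝ):ℂ) * Complex.I) + 1 = 0 := by
        push_cast
        linear_combination ((w:ℂ)^2/4) * Complex.I_sq + (-(1:ℂ)/4) * hw2C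
      rw [hroot, mul_zero]
    · have habs2 : ‖(((y2/2 : ℝ):ℂ) + ((w/2 : ℝ):ℂ) * Complex.I)‖ ^ 2 = 1 := by
        rw [Complex.sq_norm, Complex.normSq_add_mul_I]
        nlinarith [hw2]
      nlinarith [norm_nonneg (((y2/2 : ℝ):ℂ) + ((w/2 : ℝ):ℂ) * Complex.I), habs2]
  · -- trace
    have hc3 : P.coeff 3 = -(n:ℚ) := by
      rw [hP]
      simp only [coeff_add, coeff_sub, coeff_C_mul, coeff_X_pow, coeff_X, coeff_one]
      norm_num
    rw [traceQ, hmP, hPdeg]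
    norm_num [hc3]
end

section
/- The polynomial z⁶ − z⁴ − 2z³ − z² + 1 is the minimal polynomial over ℚ of a Salem number of trace 0. -/
open Polynomial

namespace SalemAux

noncomputable def qzInt : ℤ[X] := X ^ 3 - C 4 * X - C 2

lemma qzInt_natDegree : qzInt.natDegree = 3 := by unfold qzInt; compute_degree!

lemma qzInt_coeff0 : qzInt.coeff 0 = -2 := by simp [qzInt]
lemma qzInt_coeff1 : qzInt.coeff 1 = -4 := by simp [qzInt, coeff_X_pow]
lemma qzInt_coeff2 : qzInt.coeff 2 = 0 := by simp [qzInt, coeff_X_pow, coeff_X]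

lemma qzInt_monic : qzInt.Monic := by unfold qzInt; monicity!

lemma qzInt_degree : qzInt.degree = 3 := by
  rw [degree_eq_natDegree qzInt_monic.ne_zero, qzInt_natDegree]; rfl

lemma qzInt_irreducible : Irreducible qzInt := by
  apply irreducible_of_eisenstein_criterion (P := Ideal.span {(2:ℤ)})
  · exact (Ideal.span_singleton_prime (by norm_num)).2 Int.prime_two
  · rw [qzInt_monic.leadingCoeff]
    simp [Ideal.mem_span_singleton]
  · intro n hn
    rw [qzInt_degree] at hn
    have hn3 : n < 3 := by exact_mod_cast hn
    interval_cases n <;>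
      simp [qzInt_coeff0, qzInt_coeff1, qzInt_coeff2, Ideal.mem_span_singleton] <;> decide
  · rw [qzInt_degree]; norm_num
  · rw [qzInt_coeff0, Ideal.span_singleton_pow, Ideal.mem_span_singleton]
    norm_num
  · exact qzInt_monic.isPrimitive

lemma qq_irreducible : Irreducible (X ^ 3 - 4 * X - 2 : ℚ[X]) := by
  have h := (IsPrimitive.Int.irreducible_iff_irreducible_map_cast
    qzInt_monic.isPrimitive).1 qzInt_irreducible
  have heq : qzInt.map (Int.castRingHom ℚ) = (X ^ 3 - 4 * X - 2 : ℚ[X]) := by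
    simp [qzInt, Polynomial.map_sub, Polynomial.map_mul, Polynomial.map_pow]
  rwa [heq] at h

lemma qq_natDegree : (X ^ 3 - 4 * X - 2 : ℚ[X]).natDegree = 3 := by compute_degree!

lemma qq_monic : (X ^ 3 - 4 * X - 2 : ℚ[X]).Monic := by monicity!

lemma pq_natDegree : (X ^ 6 - X ^ 4 - 2 * X ^ 3 - X ^ 2 + 1 : ℚ[X]).natDegree = 6 := by
  compute_degree!

lemma pq_monic : (X ^ 6 - X ^ 4 - 2 * X ^ 3 - X ^ 2 + 1 : ℚ[X]).Monic := by monicity!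

lemma pq_coeff5 : (X ^ 6 - X ^ 4 - 2 * X ^ 3 - X ^ 2 + 1 : ℚ[X]).coeff 5 = 0 := by
  simp [coeff_X_pow, coeff_one]

lemma pq_map_complex :
    (X ^ 6 - X ^ 4 - 2 * X ^ 3 - X ^ 2 + 1 : ℚ[X]).map (algebraMap ℚ ℂ)
      = (X ^ 6 - X ^ 4 - 2 * X ^ 3 - X ^ 2 + 1 : ℂ[X]) := by
  simp [Polynomial.map_sub, Polynomial.map_add, Polynomial.map_mul, Polynomial.map_pow,
    Polynomial.map_ofNat]

open IntermediateField in
lemma natDegree_minpoly_dvd {t x : ℝ} (ht : IsIntegral ℚ t) (hx' : IsIntegral ℚ x)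
    (hx : x ∈ ℚ⟮t⟯) :
    (minpoly ℚ x).natDegree ∣ (minpoly ℚ t).natDegree := by
  have hle : ℚ⟮x⟯ ≤ ℚ⟮t⟯ := by
    rw [IntermediateField.adjoin_le_iff]
    simpa using hx
  refine ⟨IntermediateField.relfinrank ℚ⟮x⟯ ℚ⟮t⟯, ?_⟩
  rw [← IntermediateField.adjoin.finrank hx', ← IntermediateField.adjoin.finrank ht]
  exact (IntermediateField.finrank_bot_mul_relfinrank hle).symm

end SalemAux

set_option maxHeartbeats 2000000 in
open SalemAux IntermediateField in
/-- The polynomial `z⁶ - z⁴ - 2 z³ - z² + 1` is the minimal polynomial of a Salem number of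
trace `0`. -/
theorem salem_number_of_zero_trace :
    ∃ τ : ℝ, IsSalem τ ∧
      minpoly ℚ τ = (X ^ 6 - X ^ 4 - 2 * X ^ 3 - X ^ 2 + 1 : Polynomial ℚ) ∧
      traceQ τ = 0 := by
  have contf : ContinuousOn (fun t : ℝ => t ^ 3 - 4 * t - 2) (Set.Icc (-5) 5) := by fun_prop
  -- the three real roots of x^3 - 4x - 2
  obtain ⟨x₁, hx₁m, hx₁⟩ : ∃ x ∈ Set.Icc (2:ℝ) 3, x ^ 3 - 4 * x - 2 = 0 := by
    have h := intermediate_value_Icc (by norm_num : (2:ℝ) ≤ 3)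
      ((continuous_id.pow 3 |>.sub ((continuous_const.mul continuous_id)) |>.sub
        continuous_const).continuousOn :
        ContinuousOn (fun t : ℝ => t ^ 3 - 4 * t - 2) _)
    have h0 : (0:ℝ) ∈ Set.Icc ((fun t : ℝ => t ^ 3 - 4 * t - 2) 2)
        ((fun t : ℝ => t ^ 3 - 4 * t - 2) 3) := by norm_num
    obtain ⟨x, hx, hx0⟩ := h h0
    exact ⟨x, hx, hx0⟩
  obtain ⟨x₂, hx₂m, hx₂⟩ : ∃ x ∈ Set.Icc (-2:ℝ) (-1), x ^ 3 - 4 * x - 2 = 0 := by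
    have h := intermediate_value_Icc (by norm_num : (-2:ℝ) ≤ -1)
      ((continuous_id.pow 3 |>.sub ((continuous_const.mul continuous_id)) |>.sub
        continuous_const).continuousOn :
        ContinuousOn (fun t : ℝ => t ^ 3 - 4 * t - 2) _)
    have h0 : (0:ℝ) ∈ Set.Icc ((fun t : ℝ => t ^ 3 - 4 * t - 2) (-2))
        ((fun t : ℝ => t ^ 3 - 4 * t - 2) (-1)) := by norm_num
    obtain ⟨x, hx, hx0⟩ := h h0
    exact ⟨x, hx, hx0⟩
  obtain ⟨x₃, hx₃m, hx₃⟩ : ∃ x ∈ Set.Icc (-1:ℝ) 0, x ^ 3 - 4 * x - 2 = 0 := by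
    have h := intermediate_value_Icc' (by norm_num : (-1:ℝ) ≤ 0)
      ((continuous_id.pow 3 |>.sub ((continuous_const.mul continuous_id)) |>.sub
        continuous_const).continuousOn :
        ContinuousOn (fun t : ℝ => t ^ 3 - 4 * t - 2) _)
    have h0 : (0:ℝ) ∈ Set.Icc ((fun t : ℝ => t ^ 3 - 4 * t - 2) 0)
        ((fun t : ℝ => t ^ 3 - 4 * t - 2) (-1)) := by norm_num
    obtain ⟨x, hx, hx0⟩ := h h0
    exact ⟨x, hx, hx0⟩
  -- strict bounds
  have hx₁gt : 2 < x₁ := by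
    rcases eq_or_lt_of_le hx₁m.1 with h | h
    · exfalso; rw [← h] at hx₁; norm_num at hx₁
    · exact h
  have hx₂gt : -2 < x₂ := by
    rcases eq_or_lt_of_le hx₂m.1 with h | h
    · exfalso; rw [← h] at hx₂; norm_num at hx₂
    · exact h
  have hx₂lt : x₂ < -1 := by
    rcases eq_or_lt_of_le hx₂m.2 with h | h
    · exfalso; rw [h] at hx₂; norm_num at hx₂
    · exact h
  have hx₃gt : -1 < x₃ := by
    rcases eq_or_lt_of_le hx₃m.1 with h | h
    · exfalso; rw [← h] at hx₃; norm_num at hx₃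
    · exact h
  have hx₃lt : x₃ < 0 := by
    rcases eq_or_lt_of_le hx₃m.2 with h | h
    · exfalso; rw [h] at hx₃; norm_num at hx₃
    · exact h
  -- symmetric function relations
  have key : ∀ u v : ℝ, u ^ 3 - 4 * u - 2 = 0 → v ^ 3 - 4 * v - 2 = 0 → u ≠ v →
      u ^ 2 + u * v + v ^ 2 = 4 := by
    intro u v hu hv huv
    have h : (u - v) * (u ^ 2 + u * v + v ^ 2 - 4) = 0 := by linear_combination hu - hv
    rcases mul_eq_zero.1 h with h | h
    · exact absurd (sub_eq_zero.1 h) huv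
    · linarith [h]
  have k12 := key x₁ x₂ hx₁ hx₂ (by intro h; rw [h] at hx₁gt; linarith)
  have k13 := key x₁ x₃ hx₁ hx₃ (by intro h; rw [h] at hx₁gt; linarith)
  have e1 : x₁ + x₂ + x₃ = 0 := by
    have h : (x₂ - x₃) * (x₁ + x₂ + x₃) = 0 := by linear_combination k12 - k13
    rcases mul_eq_zero.1 h with h | h
    · exfalso; have := sub_eq_zero.1 h; linarith
    · linarith [h]
  have e2 : x₁ * x₂ + x₁ * x₃ + x₂ * x₃ = -4 := by
    linear_combination (x₁ + x₂) * e1 - k12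
  have e3 : x₁ * x₂ * x₃ = 2 := by
    linear_combination x₁ * e2 - x₁ ^ 2 * e1 + hx₁
  -- the Salem number
  have hs4 : (0:ℝ) < x₁ ^ 2 - 4 := by nlinarith
  set s : ℝ := Real.sqrt (x₁ ^ 2 - 4) with hsdef
  have hssq : s ^ 2 = x₁ ^ 2 - 4 := Real.sq_sqrt hs4.le
  have hspos : 0 < s := Real.sqrt_pos.2 hs4
  set τ := (x₁ + s) / 2 with hτdef
  have hτ1 : 1 < τ := by rw [hτdef]; linarith
  have hτq : τ ^ 2 - x₁ * τ + 1 = 0 := by rw [hτdef]; linear_combination hssq / 4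
  set σ := x₁ - τ with hσdef
  have hτσ : τ * σ = 1 := by rw [hσdef]; linear_combination -hτq
  have hσpos : 0 < σ := by nlinarith
  have hσlt1 : σ < 1 := by nlinarith
  have hτne0 : τ ≠ 0 := by linarith
  -- factorization identities
  have hPfac : ∀ y : ℝ, y ^ 6 - y ^ 4 - 2 * y ^ 3 - y ^ 2 + 1
      = (y ^ 2 - x₁ * y + 1) * (y ^ 2 - x₂ * y + 1) * (y ^ 2 - x₃ * y + 1) := by
    intro y
    linear_combination (y ^ 5 + 2 * y ^ 3 + y) * e1 + (-y ^ 4 - y ^ 2) * e2 + y ^ 3 * e3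
  have e1C : ((x₁:ℂ) + x₂ + x₃) = 0 := by exact_mod_cast congrArg (Complex.ofReal) e1
  have e2C : ((x₁:ℂ) * x₂ + x₁ * x₃ + x₂ * x₃) = -4 := by
    exact_mod_cast congrArg (Complex.ofReal) e2
  have e3C : ((x₁:ℂ) * x₂ * x₃) = 2 := by exact_mod_cast congrArg (Complex.ofReal) e3
  have hPfacC : ∀ z : ℂ, z ^ 6 - z ^ 4 - 2 * z ^ 3 - z ^ 2 + 1
      = (z ^ 2 - x₁ * z + 1) * (z ^ 2 - x₂ * z + 1) * (z ^ 2 - x₃ * z + 1) := by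
    intro z
    linear_combination (z ^ 5 + 2 * z ^ 3 + z) * e1C + (-z ^ 4 - z ^ 2) * e2C + z ^ 3 * e3C
  have hPτ0 : τ ^ 6 - τ ^ 4 - 2 * τ ^ 3 - τ ^ 2 + 1 = 0 := by
    rw [hPfac τ, hτq, zero_mul, zero_mul]
  -- real roots of the quadratic factor
  have hquadreal : ∀ y : ℝ, y ^ 2 - x₁ * y + 1 = 0 → y = τ ∨ y = σ := by
    intro y hy
    have h : (y - τ) * (y - σ) = 0 := by
      rw [hσdef]; linear_combination hy + hτσ
    rcases mul_eq_zero.1 h with h | h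
    · exact Or.inl (sub_eq_zero.1 h)
    · exact Or.inr (sub_eq_zero.1 h)
  -- classification of complex roots
  have circ : ∀ (x : ℝ) (z : ℂ), z ^ 2 - x * z + 1 = 0 → z.im ≠ 0 →
      z * (starRingEnd ℂ) z = 1 := by
    intro x z hq him
    have hq' : ((starRingEnd ℂ) z) ^ 2 - (x:ℂ) * ((starRingEnd ℂ) z) + 1 = 0 := by
      have h := congrArg (starRingEnd ℂ) hq
      simpa [map_sub, map_add, map_mul, map_pow, Complex.conj_ofReal] using h
    have hzne : z ≠ (starRingEnd ℂ) z := by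
      intro h
      exact him (Complex.conj_eq_iff_im.1 h.symm)
    have hsum : z + (starRingEnd ℂ) z = (x:ℂ) := by
      have h : (z - (starRingEnd ℂ) z) * (z + (starRingEnd ℂ) z - x) = 0 := by
        linear_combination hq - hq'
      rcases mul_eq_zero.1 h with h | h
      · exact absurd (sub_eq_zero.1 h) hzne
      · exact sub_eq_zero.1 h
    linear_combination z * hsum - hq
  have hrealroot : ∀ (x : ℝ) (z : ℂ), z ^ 2 - x * z + 1 = 0 → z.im = 0 →
      ((z.re : ℝ) ^ 2 - x * z.re + 1 = 0 ∧ z = (z.re : ℂ)) := by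
    intro x z hq him
    have hz : z = (z.re : ℂ) := by
      apply Complex.ext <;> simp [him]
    rw [hz] at hq
    constructor
    · exact_mod_cast hq
    · exact hz
  have classify : ∀ z : ℂ, z ^ 6 - z ^ 4 - 2 * z ^ 3 - z ^ 2 + 1 = 0 →
      z = (τ:ℂ) ∨ z = (σ:ℂ) ∨ (z.im ≠ 0 ∧ z * (starRingEnd ℂ) z = 1) := by
    intro z hz
    rw [hPfacC z] at hz
    rcases mul_eq_zero.1 hz with h12 | h3
    · rcases mul_eq_zero.1 h12 with h1 | h2
      · by_cases him : z.im = 0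
        · obtain ⟨hq, hzre⟩ := hrealroot x₁ z h1 him
          rcases hquadreal z.re hq with h | h
          · left; rw [hzre, h]
          · right; left; rw [hzre, h]
        · exact Or.inr (Or.inr ⟨him, circ x₁ z h1 him⟩)
      · by_cases him : z.im = 0
        · obtain ⟨hq, _⟩ := hrealroot x₂ z h2 him
          exfalso
          nlinarith [sq_nonneg (2 * z.re - x₂),
            mul_pos (by linarith : (0:ℝ) < x₂ + 2) (by linarith : (0:ℝ) < 2 - x₂)]
        · exact Or.inr (Or.inr ⟨him, circ x₂ z h2 him⟩)
    · by_cases him : z.im = 0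
      · obtain ⟨hq, _⟩ := hrealroot x₃ z h3 him
        exfalso
        nlinarith [sq_nonneg (2 * z.re - x₃),
          mul_pos (by linarith : (0:ℝ) < x₃ + 2) (by linarith : (0:ℝ) < 2 - x₃)]
      · exact Or.inr (Or.inr ⟨him, circ x₃ z h3 him⟩)
  -- integrality
  have hτintZ : IsIntegral ℤ τ := by
    refine ⟨X ^ 6 - X ^ 4 - 2 * X ^ 3 - X ^ 2 + 1, by monicity!, ?_⟩
    have : (Polynomial.aeval τ) (X ^ 6 - X ^ 4 - 2 * X ^ 3 - X ^ 2 + 1 : ℤ[X]) = 0 := by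
      simp only [map_add, map_sub, map_mul, map_pow, aeval_X, map_ofNat, map_one]
      linear_combination hPτ0
    simpa [Polynomial.aeval_def] using this
  have hτintQ : IsIntegral ℚ τ := by
    refine ⟨X ^ 6 - X ^ 4 - 2 * X ^ 3 - X ^ 2 + 1, pq_monic, ?_⟩
    have : (Polynomial.aeval τ) (X ^ 6 - X ^ 4 - 2 * X ^ 3 - X ^ 2 + 1 : ℚ[X]) = 0 := by
      simp only [map_add, map_sub, map_mul, map_pow, aeval_X, map_ofNat, map_one]
      linear_combination hPτ0
    simpa [Polynomial.aeval_def] using this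
  have haev : (Polynomial.aeval τ) (X ^ 6 - X ^ 4 - 2 * X ^ 3 - X ^ 2 + 1 : ℚ[X]) = 0 := by
    simp only [map_add, map_sub, map_mul, map_pow, aeval_X, map_ofNat, map_one]
    linear_combination hPτ0
  -- minpoly of x₁
  have hx₁intQ : IsIntegral ℚ x₁ := by
    refine ⟨X ^ 3 - 4 * X - 2, qq_monic, ?_⟩
    have h : (Polynomial.aeval x₁) (X ^ 3 - 4 * X - 2 : ℚ[X]) = 0 := by
      simp only [map_sub, map_mul, map_pow, aeval_X, map_ofNat]
      linear_combination hx₁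
    simpa [Polynomial.aeval_def] using h
  have hQmin : minpoly ℚ x₁ = (X ^ 3 - 4 * X - 2 : ℚ[X]) := by
    symm
    apply minpoly.eq_of_irreducible_of_monic qq_irreducible _ qq_monic
    simp only [map_sub, map_mul, map_pow, aeval_X, map_ofNat]
    linear_combination hx₁
  -- divisibility and degree of minpoly τ
  have hm_dvd : minpoly ℚ τ ∣ (X ^ 6 - X ^ 4 - 2 * X ^ 3 - X ^ 2 + 1 : ℚ[X]) :=
    minpoly.dvd ℚ τ haev
  have hdeg_le : (minpoly ℚ τ).natDegree ≤ 6 := by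
    have := natDegree_le_of_dvd hm_dvd pq_monic.ne_zero
    rwa [pq_natDegree] at this
  have hdeg_pos : 0 < (minpoly ℚ τ).natDegree := minpoly.natDegree_pos hτintQ
  -- tower: 3 ∣ degree
  have hx₁mem : x₁ ∈ ℚ⟮τ⟯ := by
    have hτmem : τ ∈ ℚ⟮τ⟯ := IntermediateField.mem_adjoin_simple_self ℚ τ
    have hx₁eq : x₁ = τ + τ⁻¹ := by
      have hσinv : σ = τ⁻¹ := by
        field_simp
        linear_combination hτσ
      rw [← hσinv, hσdef]; ring
    rw [hx₁eq]
    exact add_mem hτmem (inv_mem hτmem)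
  have hdvd3 : 3 ∣ (minpoly ℚ τ).natDegree := by
    have h := natDegree_minpoly_dvd hτintQ hx₁intQ hx₁mem
    rwa [hQmin, qq_natDegree] at h
  -- exclude degree 3
  have hdm3 : (minpoly ℚ τ).natDegree ≠ 3 := by
    intro hdm
    set m := minpoly ℚ τ with hmdef
    set M := m.map (algebraMap ℚ ℂ) with hMdef
    have hmmonic : m.Monic := minpoly.monic hτintQ
    have hMmonic : M.Monic := hmmonic.map _
    have hMdeg : M.natDegree = 3 := by rw [hMdef, natDegree_map]; exact hdm
    have hMne : M ≠ 0 := hMmonic.ne_zero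
    have hMroot_P : ∀ z : ℂ, M.eval z = 0 → z ^ 6 - z ^ 4 - 2 * z ^ 3 - z ^ 2 + 1 = 0 := by
      intro z hz
      obtain ⟨c, hc⟩ := hm_dvd
      have h1 : ((X ^ 6 - X ^ 4 - 2 * X ^ 3 - X ^ 2 + 1 : ℚ[X]).map
          (algebraMap ℚ ℂ)).eval z = 0 := by
        rw [hc, Polynomial.map_mul, eval_mul, ← hMdef, hz, zero_mul]
      rw [pq_map_complex] at h1
      simpa using h1
    have hMτ : M.eval (τ:ℂ) = 0 := by
      have h1 : (Polynomial.aeval ((τ:ℂ))) m = 0 := by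
        have h2 : (Polynomial.aeval ((IsScalarTower.toAlgHom ℚ ℝ ℂ) τ)) m
            = (IsScalarTower.toAlgHom ℚ ℝ ℂ) ((Polynomial.aeval τ) m) :=
          Polynomial.aeval_algHom_apply _ τ m
        rw [hmdef, minpoly.aeval, map_zero] at h2
        simpa using h2
      rwa [Polynomial.aeval_def, ← Polynomial.eval_map, ← hMdef] at h1
    have hsplit : M = (M.roots.map fun r => X - C r).prod :=
      (IsAlgClosed.splits M).eq_prod_roots_of_monic hMmonic
    have hcard : M.roots.card = 3 := by
      rw [← hMdeg]
      exact splits_iff_card_roots.mp (IsAlgClosed.splits M)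
    have hτroot : (τ:ℂ) ∈ M.roots := mem_roots'.2 ⟨hMne, hMτ⟩
    obtain ⟨t, ht⟩ := Multiset.exists_cons_of_mem hτroot
    have hcard2 : Multiset.card t = 2 := by
      rw [ht] at hcard; simpa using hcard
    obtain ⟨a, b, hab⟩ := Multiset.card_eq_two.mp hcard2
    rw [ht, hab] at hsplit
    simp only [Multiset.map_cons, Multiset.map_singleton, Multiset.prod_cons,
      Multiset.insert_eq_cons, Multiset.prod_singleton] at hsplit
    have hevala : M.eval a = 0 := by rw [hsplit]; simp
    have hevalb : M.eval b = 0 := by rw [hsplit]; simp [mul_comm]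
    have hmemdisj : ∀ w : ℂ, M.eval w = 0 → w = (τ:ℂ) ∨ w = a ∨ w = b := by
      intro w hw
      rw [hsplit] at hw
      simpa [eval_mul, sub_eq_zero, mul_eq_zero] using hw
    have hconjclosed : ∀ w : ℂ, M.eval w = 0 → M.eval ((starRingEnd ℂ) w) = 0 := by
      intro w hw
      have h1 : M.eval ((starRingEnd ℂ) w) = (starRingEnd ℂ) (M.eval w) := by
        rw [hMdef, eval_map, eval_map, hom_eval₂,
          show (starRingEnd ℂ).comp (algebraMap ℚ ℂ) = algebraMap ℚ ℂ from
            Subsingleton.elim _ _]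
      rw [h1, hw, map_zero]
    have haP := classify a (hMroot_P a hevala)
    have hbP := classify b (hMroot_P b hevalb)
    -- evaluation equations
    have h0 : ((m.eval 0 : ℚ) : ℂ) = (0 - (τ:ℂ)) * ((0 - a) * (0 - b)) := by
      have h1 : M.eval 0 = algebraMap ℚ ℂ (m.eval 0) := by
        rw [hMdef]; exact eval_zero_map _ m
      rw [eq_ratCast (algebraMap ℚ ℂ) (m.eval 0)] at h1
      rw [← h1, hsplit]
      simp
    have h1' : ((m.eval 1 : ℚ) : ℂ) = (1 - (τ:ℂ)) * ((1 - a) * (1 - b)) := by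
      have h1 : M.eval 1 = algebraMap ℚ ℂ (m.eval 1) := by
        rw [hMdef]; exact eval_one_map _ m
      rw [eq_ratCast (algebraMap ℚ ℂ) (m.eval 1)] at h1
      rw [← h1, hsplit]
      simp
    have hm1 : ((m.eval (-1) : ℚ) : ℂ) = (-1 - (τ:ℂ)) * ((-1 - a) * (-1 - b)) := by
      have h1 : M.eval ((algebraMap ℚ ℂ) (-1)) = algebraMap ℚ ℂ (m.eval (-1)) := by
        rw [hMdef, eval_map, eval₂_at_apply]
      rw [eq_ratCast (algebraMap ℚ ℂ) (m.eval (-1)), map_neg, map_one] at h1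
      rw [← h1, hsplit]
      simp
    -- the finisher : τ cannot be rational
    have hfin : ∀ q : ℚ, τ = (q:ℝ) → False := by
      intro q hq
      have hx₁q : x₁ = ((q + 1/q : ℚ) : ℝ) := by
        have hqne : q ≠ 0 := by
          intro h
          rw [h] at hq
          exact hτne0 (by simpa using hq)
        have hσinv : σ = τ⁻¹ := by
          field_simp
          linear_combination hτσ
        have : x₁ = τ + τ⁻¹ := by rw [← hσinv, hσdef]; ring
        rw [this, hq]
        push_cast
        ring
      have h1 := hQmin
      rw [hx₁q, show (((q + 1/q : ℚ) : ℝ)) = algebraMap ℚ ℝ (q + 1/q) from rfl,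
        minpoly.eq_X_sub_C] at h1
      have h2 := congrArg natDegree h1
      rw [natDegree_X_sub_C, qq_natDegree] at h2
      norm_num at h2
    -- case analysis
    have himτ : ((τ:ℝ):ℂ).im = 0 := by simp
    have himσ : ((σ:ℝ):ℂ).im = 0 := by simp
    rcases haP with ha | ha | ⟨haim, habs⟩
    · -- a = τ
      rcases hbP with hb | hb | ⟨hbim, hbabs⟩
      · -- a = τ, b = τ
        rw [ha, hb] at h0 h1' hm1
        have r0 : ((m.eval 0 : ℚ) : ℝ) = (0 - τ) * ((0 - τ) * (0 - τ)) := by exact_mod_cast h0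
        have r1 : ((m.eval 1 : ℚ) : ℝ) = (1 - τ) * ((1 - τ) * (1 - τ)) := by exact_mod_cast h1'
        have rm1 : ((m.eval (-1) : ℚ) : ℝ) = (-1 - τ) * ((-1 - τ) * (-1 - τ)) := by
          exact_mod_cast hm1
        apply hfin ((2 * m.eval 0 - m.eval 1 - m.eval (-1)) / 6)
        push_cast
        linear_combination (-1/3 : ℝ) * r0 + (1/6 : ℝ) * r1 + (1/6 : ℝ) * rm1
      · -- a = τ, b = σ
        rw [ha, hb] at h0
        have r0 : ((m.eval 0 : ℚ) : ℝ) = (0 - τ) * ((0 - τ) * (0 - σ)) := by exact_mod_cast h0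
        apply hfin (-(m.eval 0))
        push_cast
        linear_combination r0 - τ * hτσ
      · -- a = τ real, b nonreal
        have hb' := hconjclosed b hevalb
        rcases hmemdisj _ hb' with h | h | h
        · have : b = ((τ:ℝ):ℂ) := by
            have := congrArg (starRingEnd ℂ) h
            simpa [Complex.conj_conj, Complex.conj_ofReal] using this
          rw [this] at hbim; simp at hbim
        · rw [ha] at h
          have : b = ((τ:ℝ):ℂ) := by
            have := congrArg (starRingEnd ℂ) h
            simpa [Complex.conj_conj, Complex.conj_ofReal] using this
          rw [this] at hbim; simp at hbim
        · exact hbim (Complex.conj_eq_iff_im.1 h)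
    · -- a = σ
      rcases hbP with hb | hb | ⟨hbim, hbabs⟩
      · -- a = σ, b = τ
        rw [ha, hb] at h0
        have r0 : ((m.eval 0 : ℚ) : ℝ) = (0 - τ) * ((0 - σ) * (0 - τ)) := by exact_mod_cast h0
        apply hfin (-(m.eval 0))
        push_cast
        linear_combination r0 - τ * hτσ
      · -- a = σ, b = σ
        rw [ha, hb] at h0
        have r0 : ((m.eval 0 : ℚ) : ℝ) = (0 - τ) * ((0 - σ) * (0 - σ)) := by exact_mod_cast h0
        have hσeq : σ = -((m.eval 0 : ℚ) : ℝ) := by linear_combination r0 - σ * hτσ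
        have hc0ne : ((m.eval 0 : ℚ) : ℝ) ≠ 0 := by
          intro h
          rw [h] at hσeq
          simp at hσeq
          linarith
        have hτc : τ * ((m.eval 0 : ℚ) : ℝ) = -1 := by
          linear_combination -hτσ + τ * hσeq
        apply hfin (-(1 / m.eval 0))
        push_cast
        field_simp
        linear_combination hτc
      · -- a = σ real, b nonreal
        have hb' := hconjclosed b hevalb
        rcases hmemdisj _ hb' with h | h | h
        · have : b = ((τ:ℝ):ℂ) := by
            have := congrArg (starRingEnd ℂ) h
            simpa [Complex.conj_conj, Complex.conj_ofReal] using this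
          rw [this] at hbim; simp at hbim
        · rw [ha] at h
          have : b = ((σ:ℝ):ℂ) := by
            have := congrArg (starRingEnd ℂ) h
            simpa [Complex.conj_conj, Complex.conj_ofReal] using this
          rw [this] at hbim; simp at hbim
        · exact hbim (Complex.conj_eq_iff_im.1 h)
    · -- a nonreal
      have ha' := hconjclosed a hevala
      rcases hmemdisj _ ha' with h | h | h
      · have : a = ((τ:ℝ):ℂ) := by
          have := congrArg (starRingEnd ℂ) h
          simpa [Complex.conj_conj, Complex.conj_ofReal] using this
        rw [this] at haim; simp at haim
      · exact haim (Complex.conj_eq_iff_im.1 h)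
      · -- conj a = b
        rw [← h] at h0
        have key : ((m.eval 0 : ℚ) : ℂ) = -((τ:ℝ):ℂ) := by
          rw [h0]
          linear_combination (-(τ:ℂ)) * habs
        have : ((m.eval 0 : ℚ) : ℝ) = -τ := by exact_mod_cast key
        apply hfin (-(m.eval 0))
        push_cast
        linarith
  -- conclude degree 6 and minpoly = P
  have hdm6 : (minpoly ℚ τ).natDegree = 6 := by
    rcases hdvd3 with ⟨k, hk⟩
    omega
  have hminP : minpoly ℚ τ = (X ^ 6 - X ^ 4 - 2 * X ^ 3 - X ^ 2 + 1 : ℚ[X]) := by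
    obtain ⟨c, hc⟩ := hm_dvd
    have hmne : minpoly ℚ τ ≠ 0 := minpoly.ne_zero hτintQ
    have hcne : c ≠ 0 := by
      intro h
      rw [h, mul_zero] at hc
      exact pq_monic.ne_zero hc
    have hcdeg : c.natDegree = 0 := by
      have := congrArg natDegree hc
      rw [pq_natDegree, natDegree_mul hmne hcne, hdm6] at this
      omega
    have hceq : c = Polynomial.C (c.coeff 0) := eq_C_of_natDegree_eq_zero hcdeg
    have hlead : c.coeff 0 = 1 := by
      have h1 := congrArg leadingCoeff hc
      rw [pq_monic.leadingCoeff, leadingCoeff_mul, (minpoly.monic hτintQ).leadingCoeff,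
        one_mul] at h1
      rw [hceq] at h1
      simpa using h1.symm
    rw [hc, hceq, hlead, map_one, mul_one]
  -- assemble
  refine ⟨τ, ⟨hτintZ, hτ1, ?_, ?_⟩, hminP, ?_⟩
  · -- all conjugates in closed unit disc
    intro z hz hzne
    rw [conjugatesC, hminP, pq_map_complex] at hz
    have hzr := (mem_roots'.1 hz).2
    have hz0 : z ^ 6 - z ^ 4 - 2 * z ^ 3 - z ^ 2 + 1 = 0 := by
      simpa [IsRoot] using hzr
    rcases classify z hz0 with h | h | ⟨_, habs⟩
    · exact absurd h hzne
    · rw [h, Complex.norm_real, Real.norm_of_nonneg hσpos.le]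
      linarith
    · have : Complex.normSq z = 1 := by
        have h1 := habs
        rw [Complex.mul_conj] at h1
        exact_mod_cast h1
      rw [Complex.norm_def, this, Real.sqrt_one]
  · -- a conjugate on the unit circle
    set u : ℝ := Real.sqrt (4 - x₂ ^ 2) with hudef
    have hu4 : (0:ℝ) < 4 - x₂ ^ 2 := by nlinarith
    have husq : u ^ 2 = 4 - x₂ ^ 2 := Real.sq_sqrt hu4.le
    set z : ℂ := ((x₂ / 2 : ℝ) : ℂ) + ((u / 2 : ℝ) : ℂ) * Complex.I with hzdef
    have hzq : z ^ 2 - (x₂:ℂ) * z + 1 = 0 := by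
      have hI : (Complex.I) ^ 2 = -1 := Complex.I_sq
      have huC : ((u:ℝ):ℂ) ^ 2 = 4 - ((x₂:ℝ):ℂ) ^ 2 := by exact_mod_cast husq
      rw [hzdef]
      push_cast
      linear_combination (((u:ℂ)) ^ 2 / 4) * hI - (1/4 : ℂ) * huC
    have hzP : z ^ 6 - z ^ 4 - 2 * z ^ 3 - z ^ 2 + 1 = 0 := by
      rw [hPfacC z, hzq, mul_zero, zero_mul]
    refine ⟨z, ?_, ?_⟩
    · rw [conjugatesC, hminP, pq_map_complex]
      rw [mem_roots']
      constructor
      · have hmon : (X ^ 6 - X ^ 4 - 2 * X ^ 3 - X ^ 2 + 1 : ℂ[X]).Monic := by monicity!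
        exact hmon.ne_zero
      · show IsRoot _ z
        simp only [IsRoot, eval_add, eval_sub, eval_mul, eval_pow, eval_X, eval_one, eval_ofNat]
        linear_combination hzP
    · rw [hzdef, Complex.norm_add_mul_I]
      have : (x₂ / 2) ^ 2 + (u / 2) ^ 2 = 1 := by linear_combination husq / 4
      rw [this, Real.sqrt_one]
  · -- trace zero
    rw [traceQ, hminP, pq_natDegree]
    norm_num [coeff_X_pow, coeff_one]
end

section
/- Every root of unity ω is conjugate over ℚ to at least one of −ω, ω², or −ω². Consequently, if S ∈ ℤ[z] is a polynomial such that gcd(S(z), S(−z)·S(z²)·S(−z²)) = 1 in ℚ[z], then no root of S is a root of unity, i.e. S has no cyclotomic factor. -/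
/-!
A root of unity `ω` of order `n` is conjugate over `ℚ` to every other primitive `n`-th root of
unity, since all of them have the cyclotomic polynomial `Φₙ` as minimal polynomial. If `n` is odd
then `ω²` is primitive of order `n`; if `n = 2m` then `ω ^ m = -1`, so `-ω = ω ^ (m + 1)` and
`-ω² = ω ^ (m + 2)`, and the first exponent is prime to `n` when `m` is even, the second when `m`
is odd. Hence if `S(ω) = 0`, one of `S(-ω)`, `S(ω²)`, `S(-ω²)` vanishes too, and both `S(z)` and
`S(-z) S(z²) S(-z²)` vanish at `ω`, so they are not coprime.
-/

open Polynomial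

namespace IsPrimitiveRoot

variable {R : Type*} [CommRing R] [IsDomain R] {ζ : R}

theorem pow_eq_neg_one_of_two_mul {m : ℕ} (hζ : IsPrimitiveRoot ζ (2 * m)) (hm : 0 < m) :
    ζ ^ m = -1 :=
  (hζ.pow (by omega) (mul_comm 2 m)).eq_neg_one_of_two_right

theorem neg_or_sq_or_neg_sq {n : ℕ} (hζ : IsPrimitiveRoot ζ n) (hn : 0 < n) :
    IsPrimitiveRoot (-ζ) n ∨ IsPrimitiveRoot (ζ ^ 2) n ∨ IsPrimitiveRoot (-ζ ^ 2) n := by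
  rcases Nat.even_or_odd n with heven | hodd
  · obtain ⟨m, rfl⟩ := even_iff_two_dvd.1 heven
    have hneg : ζ ^ m = -1 := hζ.pow_eq_neg_one_of_two_mul (by omega)
    rcases Nat.even_or_odd m with hm | hm
    · left
      have hcop : (m + 1).Coprime (2 * m) :=
        Nat.Coprime.mul_right (Nat.coprime_two_right.2 hm.add_one) (by simp)
      simpa [pow_succ, hneg] using hζ.pow_of_coprime _ hcop
    · right; right
      have hcop : (m + 2).Coprime (2 * m) :=
        Nat.Coprime.mul_right (Nat.coprime_two_right.2 (hm.add_even even_two))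
          (by simpa [Nat.coprime_add_self_left] using Nat.coprime_two_left.2 hm)
      simpa [pow_add, hneg] using hζ.pow_of_coprime _ hcop
  · exact Or.inr <| Or.inl <| hζ.pow_of_coprime 2 (Nat.coprime_two_left.2 hodd)

end IsPrimitiveRoot

section Conjugates

variable {K : Type*} [Field K] [CharZero K]

theorem IsPrimitiveRoot.isConjRoot_rat {ζ η : K} {n : ℕ} (hζ : IsPrimitiveRoot ζ n)
    (hη : IsPrimitiveRoot η n) (hn : 0 < n) : IsConjRoot ℚ ζ η :=
  (cyclotomic_eq_minpoly_rat hζ hn).symm.trans (cyclotomic_eq_minpoly_rat hη hn)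

theorem IsOfFinOrder.isConjRoot_rat_neg_or_sq_or_neg_sq {ω : K} (hω : IsOfFinOrder ω) :
    IsConjRoot ℚ ω (-ω) ∨ IsConjRoot ℚ ω (ω ^ 2) ∨ IsConjRoot ℚ ω (-ω ^ 2) := by
  have hζ := IsPrimitiveRoot.orderOf ω
  have hn := hω.orderOf_pos
  exact (hζ.neg_or_sq_or_neg_sq hn).imp (hζ.isConjRoot_rat · hn)
    (Or.imp (hζ.isConjRoot_rat · hn) (hζ.isConjRoot_rat · hn))

end Conjugates

theorem IsConjRoot.aeval_eq_zero_of_aeval_eq_zero {K A : Type*} [Field K] [Ring A] [Algebra K A]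
    {x y : A} {p : K[X]} (h : IsConjRoot K x y) (hx : aeval x p = 0) : aeval y p = 0 :=
  minpoly.dvd_iff.1 (h ▸ minpoly.dvd_iff.2 hx)

theorem IsCoprime.aeval_ne_zero_of_aeval_eq_zero {R A : Type*} [CommRing R] [CommRing A]
    [Nontrivial A] [Algebra R A] {p q : R[X]} (h : IsCoprime p q) {z : A} (hp : aeval z p = 0) :
    aeval z q ≠ 0 := fun hq =>
  not_isCoprime_zero_zero (by simpa [hp, hq] using h.map (aeval z).toRingHom)

/-- Every root of unity `ω` is conjugate over `ℚ` to one of `-ω`, `ω²`, `-ω²`; consequently,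
if `S ∈ ℤ[z]` satisfies `gcd(S(z), S(-z) S(z²) S(-z²)) = 1` in `ℚ[z]` (i.e. these polynomials
are coprime), then no root of `S` is a root of unity, i.e. `S` has no cyclotomic factor. -/
theorem root_of_unity_conjugates_and_cyclotomic_factor_test :
    (∀ ω : ℂ, (∃ k : ℕ, 0 < k ∧ ω ^ k = 1) →
      minpoly ℚ ω = minpoly ℚ (-ω) ∨ minpoly ℚ ω = minpoly ℚ (ω ^ 2) ∨
        minpoly ℚ ω = minpoly ℚ (-ω ^ 2)) ∧
    (∀ S : Polynomial ℤ,
      IsCoprime (S.map (Int.castRingHom ℚ))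
        ((S.map (Int.castRingHom ℚ)).comp (-X) * (S.map (Int.castRingHom ℚ)).comp (X ^ 2) *
          (S.map (Int.castRingHom ℚ)).comp (-(X ^ 2))) →
      ∀ z : ℂ, (∃ k : ℕ, 0 < k ∧ z ^ k = 1) → (Polynomial.aeval z) S ≠ 0) := by
  refine ⟨fun ω hω => (isOfFinOrder_iff_pow_eq_one.2 hω).isConjRoot_rat_neg_or_sq_or_neg_sq, ?_⟩
  intro S hcop z hz hSz
  have hSq : aeval z (S.map (Int.castRingHom ℚ)) = 0 := by
    rwa [← algebraMap_int_eq, aeval_map_algebraMap]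
  refine hcop.aeval_ne_zero_of_aeval_eq_zero hSq ?_
  simp only [map_mul, aeval_comp, map_neg, aeval_X, map_pow]
  rcases (isOfFinOrder_iff_pow_eq_one.2 hz).isConjRoot_rat_neg_or_sq_or_neg_sq with h | h | h <;>
    simp [h.aeval_eq_zero_of_aeval_eq_zero hSq]
end
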